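/- arXiv:2104.09588 — 2 statements merged into one kernel-verified Lean document; each statement's English description precedes it below -/
import Mathlib

section
/- Fix 1 < p ≤ q < ∞, p' = p/(p-1), and λ with max(1/p', 1/q) < λ < 1, and set K(x,y) = (x² + y²)^{-λ/2}. Then there is a constant c > 0 with [ ∫_{ℝ_+} (T_K f)(x)^q dx ]^{1/q} ≤ c [ ∫_{ℝ_+} f(y)^p dy ]^{1/p} for all f ∈ M_+(ℝ_+), if and only if 1/q = λ − 1/p'. -/
open MeasureTheory Set
open scoped ENNReal

noncomputable section

/-- The positive integral operator `T_K` on `ℝ₊`. -/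
def TK (K : ℝ → ℝ → ℝ≥0∞) (f : ℝ → ℝ≥0∞) (x : ℝ) : ℝ≥0∞ :=
  ∫⁻ y in Ioi (0:ℝ), K x y * f y

/-- Distribution function `μ_f(λ) = |{x ∈ ℝ₊ : f x > λ}|`. -/
def distrib (f : ℝ → ℝ≥0∞) (l : ℝ≥0∞) : ℝ≥0∞ :=
  volume {x : ℝ | 0 < x ∧ l < f x}

/-- Nonincreasing rearrangement `f*(t) = inf{λ : μ_f(λ) ≤ t}`. -/
def rearr (f : ℝ → ℝ≥0∞) (t : ℝ) : ℝ≥0∞ :=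
  sInf {l : ℝ≥0∞ | distrib f l ≤ ENNReal.ofReal t}

/-- Extension of a real function to `ℝ≥0∞`. -/
def extE (F : ℝ → ℝ) (a : ℝ≥0∞) : ℝ≥0∞ :=
  if a = ⊤ then ⊤ else ENNReal.ofReal (F a.toReal)

/-- Orlicz–Lorentz gauge functional `ρ_{Φ,u}`. -/
def ogauge (F : ℝ → ℝ) (u : ℝ → ℝ) (f : ℝ → ℝ≥0∞) : ℝ≥0∞ :=
  sInf {l : ℝ≥0∞ | 0 < l ∧
    (∫⁻ x in Ioi (0:ℝ), extE F (f x / l) * ENNReal.ofReal (u x)) ≤ 1}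

/-- `F` is an N-function with density `φ`: `F x = ∫_0^x φ`, `φ` increasing from `ℝ₊` onto `ℝ₊`. -/
def IsNFunction (F φ : ℝ → ℝ) : Prop :=
  StrictMonoOn φ (Ioi 0) ∧ MapsTo φ (Ioi 0) (Ioi 0) ∧ SurjOn φ (Ioi 0) (Ioi 0) ∧
    ∀ x : ℝ, 0 ≤ x → F x = ∫ y in (0:ℝ)..x, φ y

/-- `F(2t) ≈ F(t)` on `ℝ₊`. -/
def Doubling (F : ℝ → ℝ) : Prop := ∃ C > 0, ∀ t > 0, F (2 * t) ≤ C * F t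

/-- A weight: nonnegative, measurable, locally integrable on `ℝ₊`. -/
def IsWeight (u : ℝ → ℝ) : Prop :=
  Measurable u ∧ (∀ x, 0 ≤ u x) ∧ LocallyIntegrableOn u (Ioi 0)

/-- `U(x) = ∫_0^x u`. -/
def Uw (u : ℝ → ℝ) (x : ℝ) : ℝ := ∫ t in (0:ℝ)..x, u t

/-- `Ψ` (with density `ψ`) is the complementary N-function of the N-function `Φ`
(with density `φ`), i.e. `ψ = φ⁻¹` and `Ψ t = ∫_0^t φ⁻¹`. -/
def IsComplementary (F φ G ψ : ℝ → ℝ) : Prop :=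
  IsNFunction F φ ∧ IsNFunction G ψ ∧ InvOn ψ φ (Ioi 0) (Ioi 0)

/-- `g` is the inverse of `f` on `[0,∞)`. -/
def IsInverseOn (g f : ℝ → ℝ) : Prop :=
  (∀ x ≥ 0, g (f x) = x) ∧ (∀ y ≥ 0, f (g y) = y)

/-- Iterated rearrangement `L(t,s) = (K^{*₂})^{*₁}(t,s)`. -/
def iterRearr (K : ℝ → ℝ → ℝ≥0∞) (t s : ℝ) : ℝ≥0∞ :=
  rearr (fun x => rearr (fun y => K x y) s) t

/-- `α(λ,x) = ∫_x^∞ Φ(λ/U(y)) u(y) dy`. -/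
def hardyAlpha (F : ℝ → ℝ) (u : ℝ → ℝ) (lam x : ℝ) : ℝ≥0∞ :=
  ∫⁻ y in Ioi x, extE F (ENNReal.ofReal lam / ENNReal.ofReal (Uw u y)) * ENNReal.ofReal (u y)

/-- `β(λ,x) = ∫_x^∞ Φ(λ/y) u(y) dy`. -/
def hardyBeta (F : ℝ → ℝ) (u : ℝ → ℝ) (lam x : ℝ) : ℝ≥0∞ :=
  ∫⁻ y in Ioi x, ENNReal.ofReal (F (lam / y)) * ENNReal.ofReal (u y)

/-- The Hardy-averaging conditions (14)–(15) for an N-function `Φ` (density `φ`,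
inverse density `ψ = φ⁻¹`) and weight `u`. -/
def HardyConditions (F φ ψ u : ℝ → ℝ) : Prop :=
  ∃ c > 0, (∀ lam > 0, ∀ x > 0,
      extE φ (ENNReal.ofReal c * hardyAlpha F u lam x / ENNReal.ofReal lam) *
        ENNReal.ofReal (Uw u x) ≤ ENNReal.ofReal (lam / c)) ∧
    (∀ lam > 0, ∀ x > 0,
      (∫⁻ y in Ioo (0:ℝ) x,
        extE ψ ((ENNReal.ofReal c * hardyBeta F u lam x / ENNReal.ofReal lam) *
          ENNReal.ofReal (y / Uw u y)) * ENNReal.ofReal (y * u y / Uw u y))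
        ≤ ENNReal.ofReal (lam / c))



lemma lint_Ioi_rpow {s y : ℝ} (hs : 1 < s) (hy : 0 < y) :
    ∫⁻ x in Ioi y, ENNReal.ofReal (x ^ (-s)) = ENNReal.ofReal (y ^ (1 - s) / (s - 1)) := by
  rw [← ofReal_integral_eq_lintegral_ofReal (integrableOn_Ioi_rpow_of_lt (by linarith) hy)
      (by filter_upwards [ae_restrict_mem measurableSet_Ioi] with x hx using
        Real.rpow_nonneg (le_of_lt (hy.trans hx)) _)]
  rw [integral_Ioi_rpow_of_lt (by linarith) hy]
  congr 1
  rw [show -s + 1 = 1 - s by ring, neg_div, ← div_neg, show -(1 - s) = s - 1 by ring]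

lemma lint_Ioc_rpow {t x : ℝ} (ht : -1 < t) (hx : 0 < x) :
    ∫⁻ y in Ioc 0 x, ENNReal.ofReal (y ^ t) = ENNReal.ofReal (x ^ (t + 1) / (t + 1)) := by
  have hint : IntegrableOn (fun y : ℝ => y ^ t) (Ioc 0 x) volume := by
    rw [← intervalIntegrable_iff_integrableOn_Ioc_of_le hx.le]
    exact intervalIntegral.intervalIntegrable_rpow' ht
  rw [← ofReal_integral_eq_lintegral_ofReal hint
      (by filter_upwards [ae_restrict_mem measurableSet_Ioc] with y hy using
        Real.rpow_nonneg hy.1.le _)]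
  congr 1
  rw [← intervalIntegral.integral_of_le hx.le]
  open intervalIntegral in
  rw [integral_rpow (Or.inl ht),
    Real.zero_rpow (by linarith), sub_zero]

theorem minkowski_lintegral {α β : Type*} [MeasurableSpace α] [MeasurableSpace β]
    (μ : Measure α) (ν : Measure β) [SigmaFinite μ] [SigmaFinite ν]
    {F : α × β → ℝ≥0∞} (hF : Measurable F) {r : ℝ} (hr : 1 < r) :
    (∫⁻ x, (∫⁻ y, F (x, y) ∂ν) ^ r ∂μ) ^ (1 / r) ≤
      ∫⁻ y, (∫⁻ x, F (x, y) ^ r ∂μ) ^ (1 / r) ∂ν := by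
  set Φ : α → ℝ≥0∞ := fun x => ∫⁻ y, F (x, y) ∂ν with hΦdef
  have hΦ : Measurable Φ := hF.lintegral_prod_right'
  set R : ℝ≥0∞ := ∫⁻ y, (∫⁻ x, F (x, y) ^ r ∂μ) ^ (1 / r) ∂ν with hRdef
  have hr0 : (0:ℝ) < r := by linarith
  have hrc : Real.HolderConjugate r (r / (r - 1)) := (Real.holderConjugate_iff_eq_conjExponent hr).mpr rfl
  set r' : ℝ := r / (r - 1) with hr'def
  have hr'0 : (0:ℝ) < r' := hrc.symm.pos
  have hsum : 1 / r + 1 / r' = 1 := by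
    rw [one_div, one_div]; exact hrc.inv_add_inv_eq_one
  set g : ℕ → α → ℝ≥0∞ := fun n x =>
    (spanningSets μ n).indicator (fun x => min (Φ x) n ^ r) x with hgdef
  have hgmeas : ∀ n, Measurable (g n) :=
    fun n => ((hΦ.min measurable_const).pow_const _).indicator (measurableSet_spanningSets μ n)
  set I : ℕ → ℝ≥0∞ := fun n => ∫⁻ x, g n x ∂μ with hIdef
  have hIA : ∀ n, I n = ∫⁻ x in spanningSets μ n, min (Φ x) n ^ r ∂μ := by
    intro n; rw [hIdef]; simp only [hgdef]
    rw [lintegral_indicator (measurableSet_spanningSets μ n)]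
  have hIfin : ∀ n, I n ≠ ⊤ := by
    intro n
    have h1 : I n ≤ (n : ℝ≥0∞) ^ r * μ (spanningSets μ n) := by
      rw [hIA]
      calc ∫⁻ x in spanningSets μ n, min (Φ x) n ^ r ∂μ
          ≤ ∫⁻ _ in spanningSets μ n, (n : ℝ≥0∞) ^ r ∂μ :=
            lintegral_mono fun x => ENNReal.rpow_le_rpow (min_le_right _ _) hr0.le
        _ = (n : ℝ≥0∞) ^ r * μ (spanningSets μ n) := by rw [setLIntegral_const]
    exact ne_top_of_le_ne_top
      (ENNReal.mul_ne_top (ENNReal.rpow_ne_top_of_nonneg hr0.le (by simp))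
        (measure_spanningSets_lt_top μ n).ne) h1
  have key : ∀ n, I n ≤ R ^ r := by
    intro n
    rcases eq_or_ne (I n) 0 with h0 | h0
    · rw [h0]; exact zero_le
    set A := spanningSets μ n with hA
    have hAm : MeasurableSet A := measurableSet_spanningSets μ n
    set m : α → ℝ≥0∞ := fun x => min (Φ x) n ^ (r - 1) with hmdef
    have hmmeas : Measurable m := (hΦ.min measurable_const).pow_const _
    have hmne : ∀ x, m x ≠ ⊤ := by
      intro x
      exact ENNReal.rpow_ne_top_of_nonneg (by linarith)
        (ne_top_of_le_ne_top (by simp) (min_le_right _ _))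
    have step1 : I n ≤ ∫⁻ x in A, m x * Φ x ∂μ := by
      rw [hIA]
      refine lintegral_mono fun x => ?_
      have h2 : min (Φ x) ↑n ^ r = m x * min (Φ x) ↑n := by
        rw [hmdef]
        have := ENNReal.rpow_add_of_nonneg (x := min (Φ x) ↑n) (r - 1) 1 (by linarith) zero_le_one
        rw [sub_add_cancel] at this
        rw [this, ENNReal.rpow_one]
      rw [h2]
      exact mul_le_mul_right (min_le_left _ _) _
    have step2 : ∫⁻ x in A, m x * Φ x ∂μ = ∫⁻ y, ∫⁻ x in A, m x * F (x, y) ∂μ ∂ν := by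
      have e1 : ∫⁻ x in A, m x * Φ x ∂μ = ∫⁻ x in A, ∫⁻ y, m x * F (x, y) ∂ν ∂μ := by
        refine lintegral_congr fun x => ?_
        rw [hΦdef, lintegral_const_mul' _ _ (hmne x)]
      rw [e1]
      exact lintegral_lintegral_swap
        (((hmmeas.comp measurable_fst).mul hF).aemeasurable)
    have step3 : ∀ y, ∫⁻ x in A, m x * F (x, y) ∂μ ≤
        (∫⁻ x in A, F (x, y) ^ r ∂μ) ^ (1 / r) * I n ^ (1 / r') := by
      intro y
      have hH := ENNReal.lintegral_mul_le_Lp_mul_Lq (μ.restrict A) hrc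
        (f := fun x => F (x, y)) (g := m)
        ((hF.comp (measurable_id.prodMk measurable_const)).aemeasurable) hmmeas.aemeasurable
      have e2 : ∫⁻ x in A, m x * F (x, y) ∂μ = ∫⁻ x in A, ((fun x => F (x, y)) * m) x ∂μ := by
        refine lintegral_congr fun x => ?_
        simp only [Pi.mul_apply]
        exact mul_comm _ _
      rw [e2]
      refine hH.trans ?_
      have e3 : ∫⁻ x in A, m x ^ r' ∂μ = I n := by
        rw [hIA]
        refine lintegral_congr fun x => ?_
        rw [hmdef, ← ENNReal.rpow_mul]
        congr 1
        rw [hr'def]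
        have hr1 : r - 1 ≠ 0 := by linarith
        field_simp
      rw [e3]
    have step4 : I n ≤ R * I n ^ (1 / r') := by
      calc I n ≤ ∫⁻ y, (∫⁻ x in A, F (x, y) ^ r ∂μ) ^ (1 / r) * I n ^ (1 / r') ∂ν :=
            (step1.trans step2.le).trans (lintegral_mono step3)
        _ = (∫⁻ y, (∫⁻ x in A, F (x, y) ^ r ∂μ) ^ (1 / r) ∂ν) * I n ^ (1 / r') := by
            rw [lintegral_mul_const'' _ (((hF.pow_const r).lintegral_prod_left').pow_const _).aemeasurable]
        _ ≤ R * I n ^ (1 / r') := by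
            refine mul_le_mul_left (lintegral_mono fun y => ?_) _
            exact ENNReal.rpow_le_rpow
              (lintegral_mono' Measure.restrict_le_self le_rfl) (by positivity)
    -- cancel
    have hcan : I n ^ (1 / r) ≤ R := by
      have hdecomp : I n = I n ^ (1 / r) * I n ^ (1 / r') := by
        rw [← ENNReal.rpow_add _ _ h0 (hIfin n), hsum, ENNReal.rpow_one]
      have step5 : I n ^ (1 / r) * I n ^ (1 / r') ≤ R * I n ^ (1 / r') := by
        rw [← hdecomp]; exact step4
      exact (ENNReal.mul_le_mul_iff_left
        ((ENNReal.rpow_pos (zero_lt_iff.mpr h0) (hIfin n)).ne')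
        (ENNReal.rpow_ne_top_of_nonneg (by positivity) (hIfin n))).mp step5
    calc I n = (I n ^ (1 / r)) ^ r := by
          rw [← ENNReal.rpow_mul, one_div, inv_mul_cancel₀ hr0.ne', ENNReal.rpow_one]
      _ ≤ R ^ r := ENNReal.rpow_le_rpow hcan hr0.le
  -- monotone convergence
  have hmono : Monotone g := by
    intro n k hnk x
    by_cases hx : x ∈ spanningSets μ n
    · have hx' : x ∈ spanningSets μ k := monotone_spanningSets μ hnk hx
      rw [hgdef]
      simp only [indicator_of_mem hx, indicator_of_mem hx']
      exact ENNReal.rpow_le_rpow (min_le_min le_rfl (by exact_mod_cast Nat.cast_le.2 hnk)) hr0.le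
    · rw [hgdef]; simp only [indicator_of_notMem hx]; exact zero_le
  have hsup : ∀ x, (⨆ n, g n x) = Φ x ^ r := by
    intro x
    obtain ⟨N, hN⟩ : ∃ n, x ∈ spanningSets μ n := by
      have := iUnion_spanningSets μ
      have hx : x ∈ ⋃ n, spanningSets μ n := by rw [this]; trivial
      exact mem_iUnion.mp hx
    apply le_antisymm
    · refine iSup_le fun n => ?_
      by_cases hx : x ∈ spanningSets μ n
      · rw [hgdef]; simp only [indicator_of_mem hx]
        exact ENNReal.rpow_le_rpow (min_le_left _ _) hr0.le
      · rw [hgdef]; simp only [indicator_of_notMem hx]; exact zero_le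
    · rcases eq_top_or_lt_top (Φ x) with htop | hlt
      · rw [htop, ENNReal.top_rpow_of_pos hr0, top_le_iff, iSup_eq_top]
        intro b hb
        obtain ⟨k, hk⟩ := ENNReal.exists_nat_gt hb.ne
        refine ⟨max k N, ?_⟩
        have hxN : x ∈ spanningSets μ (max k N) :=
          monotone_spanningSets μ (le_max_right _ _) hN
        rw [hgdef]
        simp only [indicator_of_mem hxN, htop]
        have h1 : min (⊤:ℝ≥0∞) (max k N : ℕ) = (max k N : ℕ) := min_eq_right le_top
        rw [h1]
        rcases Nat.eq_zero_or_pos k with hk0 | hk0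
        · subst hk0
          exact absurd hk (by simp)
        · have hge1 : (1:ℝ≥0∞) ≤ ((max k N : ℕ) : ℝ≥0∞) := by
            have : (1:ℕ) ≤ max k N := le_trans hk0 (le_max_left _ _)
            exact_mod_cast this
          calc b < ((k:ℕ) : ℝ≥0∞) := hk
            _ ≤ ((max k N : ℕ) : ℝ≥0∞) := by exact_mod_cast le_max_left _ _
            _ = ((max k N : ℕ) : ℝ≥0∞) ^ (1:ℝ) := (ENNReal.rpow_one _).symm
            _ ≤ ((max k N : ℕ) : ℝ≥0∞) ^ r := ENNReal.rpow_le_rpow_of_exponent_le hge1 hr.le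
      · obtain ⟨k, hk⟩ := ENNReal.exists_nat_gt hlt.ne
        have hxN : x ∈ spanningSets μ (max k N) :=
          monotone_spanningSets μ (le_max_right _ _) hN
        have : g (max k N) x = Φ x ^ r := by
          rw [hgdef]
          simp only [indicator_of_mem hxN]
          congr 1
          refine min_eq_left (le_trans hk.le ?_)
          exact_mod_cast Nat.cast_le.2 (le_max_left _ _)
        rw [← this]
        exact le_iSup (fun n => g n x) (max k N)
  have hfin : ∫⁻ x, Φ x ^ r ∂μ ≤ R ^ r := by
    have e4 : ∫⁻ x, Φ x ^ r ∂μ = ⨆ n, I n := by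
      rw [← lintegral_iSup hgmeas hmono]
      exact lintegral_congr fun x => (hsup x).symm
    rw [e4]
    exact iSup_le key
  calc (∫⁻ x, Φ x ^ r ∂μ) ^ (1/r) ≤ (R ^ r) ^ (1/r) := ENNReal.rpow_le_rpow hfin (by positivity)
    _ = R := by rw [← ENNReal.rpow_mul, mul_one_div, div_self hr0.ne', ENNReal.rpow_one]

lemma lintegral_scale_Ioi (g : ℝ → ℝ≥0∞) (hg : Measurable g) {r : ℝ} (hr : 0 < r) :
    ∫⁻ x in Ioi (0:ℝ), g x = ENNReal.ofReal r * ∫⁻ x in Ioi (0:ℝ), g (r * x) := by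
  have h := Real.map_volume_mul_left (ne_of_gt hr)
  set h' : ℝ → ℝ≥0∞ := fun x => (Ioi (0:ℝ)).indicator g x with hh'
  have hh'm : Measurable h' := hg.indicator measurableSet_Ioi
  have e1 : ∫⁻ x in Ioi (0:ℝ), g x = ∫⁻ x, h' x := by
    rw [hh', lintegral_indicator measurableSet_Ioi]
  have e2 : ∫⁻ x, h' x ∂(Measure.map (fun x => r * x) volume)
      = ∫⁻ x, h' (r * x) := lintegral_map hh'm (measurable_const_mul r)
  have e3 : (volume : Measure ℝ) = ENNReal.ofReal r • Measure.map (fun x => r * x) volume := by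
    rw [h, smul_smul, ← ENNReal.ofReal_mul hr.le, abs_of_pos (inv_pos.mpr hr),
      mul_inv_cancel₀ hr.ne', ENNReal.ofReal_one, one_smul]
  have e4 : ∫⁻ x, h' x = ENNReal.ofReal r * ∫⁻ x, h' (r * x) := by
    conv_lhs => rw [e3]
    rw [lintegral_smul_measure, e2, smul_eq_mul]
  have e5 : ∫⁻ x, h' (r * x) = ∫⁻ x in Ioi (0:ℝ), g (r * x) := by
    rw [← lintegral_indicator (measurableSet_Ioi (a := (0:ℝ)))]
    refine lintegral_congr fun x => ?_
    rcases lt_or_ge 0 x with hx | hx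
    · have h1 : r * x ∈ Ioi (0:ℝ) := mul_pos hr hx
      simp only [hh', indicator_of_mem h1, indicator_of_mem (show x ∈ Ioi (0:ℝ) from hx)]
    · have h1 : r * x ∉ Ioi (0:ℝ) := by
        simp only [mem_Ioi, not_lt]
        exact mul_nonpos_of_nonneg_of_nonpos hr.le hx
      have h2 : x ∉ Ioi (0:ℝ) := by simpa using hx
      simp only [hh', indicator_of_notMem h1, indicator_of_notMem h2]
  rw [e1, e4, e5]

lemma sq_rpow {x : ℝ} (hx : 0 ≤ x) (c : ℝ) : (x ^ 2) ^ c = x ^ (2 * c) := by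
  rw [← Real.rpow_natCast x 2, ← Real.rpow_mul hx]
  norm_num

lemma ker_le_left {lam x y : ℝ} (hlam : 0 ≤ lam) (hx : 0 < x) :
    (x ^ 2 + y ^ 2) ^ (-(lam / 2)) ≤ x ^ (-lam) := by
  have h1 : (x ^ 2 + y ^ 2) ^ (-(lam / 2)) ≤ (x ^ 2) ^ (-(lam / 2)) :=
    Real.rpow_le_rpow_of_nonpos (by positivity) (by nlinarith [sq_nonneg y]) (by linarith)
  calc (x ^ 2 + y ^ 2) ^ (-(lam / 2)) ≤ (x ^ 2) ^ (-(lam / 2)) := h1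
    _ = x ^ (-lam) := by rw [sq_rpow hx.le]; ring_nf

lemma ker_le_right {lam x y : ℝ} (hlam : 0 ≤ lam) (hy : 0 < y) :
    (x ^ 2 + y ^ 2) ^ (-(lam / 2)) ≤ y ^ (-lam) := by
  have h1 : (x ^ 2 + y ^ 2) ^ (-(lam / 2)) ≤ (y ^ 2) ^ (-(lam / 2)) :=
    Real.rpow_le_rpow_of_nonpos (by positivity) (by nlinarith [sq_nonneg x]) (by linarith)
  calc (x ^ 2 + y ^ 2) ^ (-(lam / 2)) ≤ (y ^ 2) ^ (-(lam / 2)) := h1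
    _ = y ^ (-lam) := by rw [sq_rpow hy.le]; ring_nf

lemma ker_meas (lam : ℝ) :
    Measurable fun p : ℝ × ℝ => ENNReal.ofReal ((p.1 ^ 2 + p.2 ^ 2) ^ (-(lam / 2))) := by
  fun_prop

lemma TK_meas {f : ℝ → ℝ≥0∞} (hf : Measurable f) (lam : ℝ) :
    Measurable (TK (fun x y => ENNReal.ofReal ((x ^ 2 + y ^ 2) ^ (-(lam / 2)))) f) := by
  have : Measurable fun p : ℝ × ℝ =>
      ENNReal.ofReal ((p.1 ^ 2 + p.2 ^ 2) ^ (-(lam / 2))) * f p.2 :=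
    (ker_meas lam).mul (hf.comp measurable_snd)
  exact this.lintegral_prod_right'
lemma TK_point_scale {lam r u : ℝ} (hr : 0 < r) (hu : 0 < u) :
    TK (fun x y => ENNReal.ofReal ((x ^ 2 + y ^ 2) ^ (-(lam / 2))))
        ((Ioo r (2*r)).indicator (fun _ => 1)) (r * u)
      = ENNReal.ofReal (r ^ (1 - lam)) *
        TK (fun x y => ENNReal.ofReal ((x ^ 2 + y ^ 2) ^ (-(lam / 2))))
          ((Ioo (1:ℝ) 2).indicator (fun _ => 1)) u := by
  set k : ℝ → ℝ → ℝ≥0∞ := fun x y => ENNReal.ofReal ((x ^ 2 + y ^ 2) ^ (-(lam / 2))) with hk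
  set f : ℝ → ℝ≥0∞ := (Ioo (1:ℝ) 2).indicator (fun _ => 1) with hf
  set fr : ℝ → ℝ≥0∞ := (Ioo r (2*r)).indicator (fun _ => 1) with hfr
  have hfrm : Measurable fr := measurable_one.indicator measurableSet_Ioo
  have hgm : Measurable fun y => k (r*u) y * fr y := by
    have h1 : Measurable fun y : ℝ => k (r*u) y := by
      apply Measurable.ennreal_ofReal
      fun_prop
    exact h1.mul hfrm
  have e1 : TK k fr (r * u) = ENNReal.ofReal r *
      ∫⁻ t in Ioi (0:ℝ), k (r*u) (r*t) * fr (r*t) :=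
    lintegral_scale_Ioi _ hgm hr
  have e2 : ∀ t : ℝ, 0 < t → k (r*u) (r*t) * fr (r*t)
      = ENNReal.ofReal (r ^ (-lam)) * (k u t * f t) := by
    intro t ht
    have efr : fr (r*t) = f t := by
      rcases (em (t ∈ Ioo (1:ℝ) 2)) with hmem | hmem
      · have h2 : r*t ∈ Ioo r (2*r) := by
          constructor
          · nlinarith [hmem.1]
          · nlinarith [hmem.2]
        rw [hfr, indicator_of_mem h2, hf, indicator_of_mem hmem]
      · have h2 : r*t ∉ Ioo r (2*r) := by
          intro hcon
          refine hmem ⟨?_, ?_⟩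
          · have := hcon.1; nlinarith
          · have := hcon.2; nlinarith
        rw [hfr, indicator_of_notMem h2, hf, indicator_of_notMem hmem]
    have ek : k (r*u) (r*t) = ENNReal.ofReal (r ^ (-lam)) * k u t := by
      rw [hk]
      simp only []
      have hb : (r*u)^2 + (r*t)^2 = r^2 * (u^2 + t^2) := by ring
      rw [hb, Real.mul_rpow (sq_nonneg r) (by positivity),
        sq_rpow hr.le, ← ENNReal.ofReal_mul (by positivity)]
      ring_nf
    rw [ek, efr]
    ring
  have e3 : ∫⁻ t in Ioi (0:ℝ), k (r*u) (r*t) * fr (r*t)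
      = ENNReal.ofReal (r ^ (-lam)) * TK k f u := by
    rw [setLIntegral_congr_fun measurableSet_Ioi
      (fun t (ht : t ∈ Ioi (0:ℝ)) => e2 t ht)]
    rw [lintegral_const_mul' _ _ ENNReal.ofReal_ne_top]
    rfl
  rw [e1, e3, ← mul_assoc, ← ENNReal.ofReal_mul hr.le]
  congr 2
  rw [show (1:ℝ) - lam = 1 + (-lam) by ring, Real.rpow_add hr, Real.rpow_one]

lemma Wbound {lam α x : ℝ} (hlam0 : 0 < lam) (hα0 : 0 < α) (hα1 : α < 1)
    (hs : 1 < lam + α) (hx : 0 < x) :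
    ∫⁻ y in Ioi (0:ℝ), ENNReal.ofReal ((x^2 + y^2) ^ (-(lam/2))) * ENNReal.ofReal (y ^ (-α))
      ≤ ENNReal.ofReal ((1/(1-α) + 1/(lam+α-1)) * x ^ (1-lam-α)) := by
  rw [← Ioc_union_Ioi_eq_Ioi hx.le,
    lintegral_union measurableSet_Ioi (Ioc_disjoint_Ioi le_rfl)]
  have piece1 : ∫⁻ y in Ioc (0:ℝ) x,
      ENNReal.ofReal ((x^2 + y^2) ^ (-(lam/2))) * ENNReal.ofReal (y ^ (-α))
      ≤ ENNReal.ofReal (1/(1-α) * x ^ (1-lam-α)) := by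
    have h1 : ∫⁻ y in Ioc (0:ℝ) x,
        ENNReal.ofReal ((x^2 + y^2) ^ (-(lam/2))) * ENNReal.ofReal (y ^ (-α))
        ≤ ∫⁻ y in Ioc (0:ℝ) x, ENNReal.ofReal (x ^ (-lam)) * ENNReal.ofReal (y ^ (-α)) := by
      refine setLIntegral_mono' measurableSet_Ioc fun y hy => ?_
      exact mul_le_mul_left (ENNReal.ofReal_le_ofReal (ker_le_left hlam0.le hx)) _
    refine h1.trans ?_
    rw [lintegral_const_mul' _ _ ENNReal.ofReal_ne_top,
      lint_Ioc_rpow (by linarith : (-1:ℝ) < -α) hx,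
      ← ENNReal.ofReal_mul (by positivity)]
    refine ENNReal.ofReal_le_ofReal ?_
    rw [show -α + 1 = 1 - α by ring]
    rw [show x ^ (-lam) * (x ^ (1-α) / (1-α)) = 1/(1-α) * (x ^ (-lam) * x ^ (1-α)) by ring,
      ← Real.rpow_add hx, show -lam + (1-α) = 1-lam-α by ring]
  have piece2 : ∫⁻ y in Ioi x,
      ENNReal.ofReal ((x^2 + y^2) ^ (-(lam/2))) * ENNReal.ofReal (y ^ (-α))
      ≤ ENNReal.ofReal (1/(lam+α-1) * x ^ (1-lam-α)) := by
    have h1 : ∫⁻ y in Ioi x,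
        ENNReal.ofReal ((x^2 + y^2) ^ (-(lam/2))) * ENNReal.ofReal (y ^ (-α))
        ≤ ∫⁻ y in Ioi x, ENNReal.ofReal (y ^ (-(lam+α))) := by
      refine setLIntegral_mono' measurableSet_Ioi fun y hy => ?_
      have hy0 : (0:ℝ) < y := hx.trans hy
      calc ENNReal.ofReal ((x^2 + y^2) ^ (-(lam/2))) * ENNReal.ofReal (y ^ (-α))
          ≤ ENNReal.ofReal (y ^ (-lam)) * ENNReal.ofReal (y ^ (-α)) :=
            mul_le_mul_left (ENNReal.ofReal_le_ofReal (ker_le_right hlam0.le hy0)) _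
        _ = ENNReal.ofReal (y ^ (-(lam+α))) := by
            rw [← ENNReal.ofReal_mul (by positivity), ← Real.rpow_add hy0,
              show -lam + -α = -(lam+α) by ring]
    refine h1.trans ?_
    rw [lint_Ioi_rpow hs hx]
    refine ENNReal.ofReal_le_ofReal ?_
    rw [show (1:ℝ) - (lam+α) = 1-lam-α by ring]
    rw [div_eq_mul_one_div, mul_comm]
  calc _ ≤ ENNReal.ofReal (1/(1-α) * x ^ (1-lam-α)) + ENNReal.ofReal (1/(lam+α-1) * x ^ (1-lam-α)) :=
        add_le_add piece1 piece2
    _ = ENNReal.ofReal ((1/(1-α) + 1/(lam+α-1)) * x ^ (1-lam-α)) := by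
        have h1 : (0:ℝ) < 1 - α := by linarith
        have h2 : (0:ℝ) < lam + α - 1 := by linarith
        have h3 : (0:ℝ) < x ^ (1-lam-α) := Real.rpow_pos_of_pos hx _
        rw [← ENNReal.ofReal_add (le_of_lt (mul_pos (div_pos one_pos h1) h3))
          (le_of_lt (mul_pos (div_pos one_pos h2) h3))]
        congr 1
        ring

lemma holder_step {p p' a lam x : ℝ} (hpp' : Real.HolderConjugate p p')
    {f : ℝ → ℝ≥0∞} (hf : Measurable f) (hx : 0 < x) :
    TK (fun x y => ENNReal.ofReal ((x ^ 2 + y ^ 2) ^ (-(lam / 2)))) f x ≤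
      (∫⁻ y in Ioi (0:ℝ),
          ENNReal.ofReal ((x ^ 2 + y ^ 2) ^ (-(lam / 2))) * ENNReal.ofReal (y ^ (a*p)) * f y ^ p)
        ^ (1/p) *
      (∫⁻ y in Ioi (0:ℝ),
          ENNReal.ofReal ((x ^ 2 + y ^ 2) ^ (-(lam / 2))) * ENNReal.ofReal (y ^ (-(a*p'))))
        ^ (1/p') := by
  have hp0 : (0:ℝ) < p := hpp'.pos
  have hp'0 : (0:ℝ) < p' := hpp'.symm.pos
  set k : ℝ → ℝ≥0∞ := fun y => ENNReal.ofReal ((x ^ 2 + y ^ 2) ^ (-(lam / 2))) with hk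
  have hkm : Measurable k := by apply Measurable.ennreal_ofReal; fun_prop
  have hkpos : ∀ y, 0 < (x ^ 2 + y ^ 2) ^ (-(lam / 2)) := by
    intro y
    exact Real.rpow_pos_of_pos (by nlinarith [sq_nonneg y]) _
  have hk0 : ∀ y, k y ≠ 0 := fun y => (ENNReal.ofReal_pos.mpr (hkpos y)).ne'
  have hktop : ∀ y, k y ≠ ⊤ := fun y => ENNReal.ofReal_ne_top
  set u : ℝ → ℝ≥0∞ := fun y => k y ^ (1/p) * ENNReal.ofReal (y ^ a) * f y with hu
  set v : ℝ → ℝ≥0∞ := fun y => k y ^ (1/p') * ENNReal.ofReal (y ^ (-a)) with hv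
  have hum : Measurable u := (((hkm.pow_const _).mul (by fun_prop)).mul hf)
  have hvm : Measurable v := ((hkm.pow_const _).mul (by fun_prop))
  have e0 : TK (fun x y => ENNReal.ofReal ((x ^ 2 + y ^ 2) ^ (-(lam / 2)))) f x
      = ∫⁻ y in Ioi (0:ℝ), (u * v) y := by
    refine setLIntegral_congr_fun measurableSet_Ioi (fun y (hy : 0 < y) => ?_)
    simp only [Pi.mul_apply, hu, hv]
    have h1 : k y ^ (1/p) * ENNReal.ofReal (y ^ a) * f y * (k y ^ (1/p') * ENNReal.ofReal (y ^ (-a)))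
        = (k y ^ (1/p) * k y ^ (1/p')) * (ENNReal.ofReal (y ^ a) * ENNReal.ofReal (y ^ (-a))) * f y := by
      ring
    rw [h1, ← ENNReal.rpow_add _ _ (hk0 y) (hktop y),
      show 1/p + 1/p' = 1 by rw [one_div, one_div]; exact hpp'.inv_add_inv_eq_one,
      ENNReal.rpow_one, ← ENNReal.ofReal_mul (by positivity), ← Real.rpow_add hy,
      add_neg_cancel, Real.rpow_zero, ENNReal.ofReal_one, mul_one]
  have hH := ENNReal.lintegral_mul_le_Lp_mul_Lq (volume.restrict (Ioi (0:ℝ))) hpp'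
    hum.aemeasurable hvm.aemeasurable
  rw [e0]
  refine hH.trans ?_
  have eu : ∫⁻ y in Ioi (0:ℝ), u y ^ p
      = ∫⁻ y in Ioi (0:ℝ), k y * ENNReal.ofReal (y ^ (a*p)) * f y ^ p := by
    refine setLIntegral_congr_fun measurableSet_Ioi (fun y (hy : 0 < y) => ?_)
    simp only [hu]
    rw [ENNReal.mul_rpow_of_nonneg _ _ hp0.le, ENNReal.mul_rpow_of_nonneg _ _ hp0.le,
      ← ENNReal.rpow_mul, one_div, inv_mul_cancel₀ hp0.ne', ENNReal.rpow_one,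
      ENNReal.ofReal_rpow_of_pos (Real.rpow_pos_of_pos hy _), ← Real.rpow_mul hy.le]
  have ev : ∫⁻ y in Ioi (0:ℝ), v y ^ p'
      = ∫⁻ y in Ioi (0:ℝ), k y * ENNReal.ofReal (y ^ (-(a*p'))) := by
    refine setLIntegral_congr_fun measurableSet_Ioi (fun y (hy : 0 < y) => ?_)
    simp only [hv]
    rw [ENNReal.mul_rpow_of_nonneg _ _ hp'0.le,
      ← ENNReal.rpow_mul, one_div, inv_mul_cancel₀ hp'0.ne', ENNReal.rpow_one,
      ENNReal.ofReal_rpow_of_pos (Real.rpow_pos_of_pos hy _), ← Real.rpow_mul hy.le,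
      neg_mul]
  rw [eu, ev]

lemma mink_step {lam m r ap : ℝ} (hr : 1 < r) (hm0 : 0 < m) (hm1 : m < 1) (hlam0 : 0 < lam)
    (hs : 1 < m + lam * r) (hid : ap + (1 - m - lam * r)/r = 0)
    {g : ℝ → ℝ≥0∞} (hg : Measurable g) :
    (∫⁻ x in Ioi (0:ℝ), ENNReal.ofReal (x ^ (-m)) *
        (∫⁻ y in Ioi (0:ℝ),
          ENNReal.ofReal ((x ^ 2 + y ^ 2) ^ (-(lam / 2))) * ENNReal.ofReal (y ^ ap) * g y) ^ r)
      ^ (1/r)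
      ≤ ENNReal.ofReal ((1/(1-m) + 1/(lam*r+m-1)) ^ (1/r)) * ∫⁻ y in Ioi (0:ℝ), g y := by
  have hr0 : (0:ℝ) < r := by linarith
  set CB : ℝ := 1/(1-m) + 1/(lam*r+m-1) with hCB
  have hCB0 : 0 < CB := by
    have h1 : (0:ℝ) < 1 - m := by linarith
    have h2 : (0:ℝ) < lam*r+m-1 := by linarith
    positivity
  set F : ℝ × ℝ → ℝ≥0∞ := fun z => ENNReal.ofReal (z.1 ^ (-(m/r))) *
      (ENNReal.ofReal ((z.1 ^ 2 + z.2 ^ 2) ^ (-(lam / 2))) * ENNReal.ofReal (z.2 ^ ap) * g z.2)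
    with hF
  have hFm : Measurable F := by
    apply Measurable.mul
    · fun_prop
    · exact ((by fun_prop : Measurable fun z : ℝ × ℝ =>
        ENNReal.ofReal ((z.1 ^ 2 + z.2 ^ 2) ^ (-(lam / 2))) * ENNReal.ofReal (z.2 ^ ap)).mul
        (hg.comp measurable_snd))
  have eV : ∫⁻ x in Ioi (0:ℝ), ENNReal.ofReal (x ^ (-m)) *
      (∫⁻ y in Ioi (0:ℝ),
        ENNReal.ofReal ((x ^ 2 + y ^ 2) ^ (-(lam / 2))) * ENNReal.ofReal (y ^ ap) * g y) ^ r
      = ∫⁻ x in Ioi (0:ℝ), (∫⁻ y in Ioi (0:ℝ), F (x, y)) ^ r := by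
    refine setLIntegral_congr_fun measurableSet_Ioi (fun x (hx : 0 < x) => ?_)
    rw [hF]
    simp only []
    rw [lintegral_const_mul' _ _ ENNReal.ofReal_ne_top,
      ENNReal.mul_rpow_of_nonneg _ _ hr0.le,
      ENNReal.ofReal_rpow_of_pos (Real.rpow_pos_of_pos hx _), ← Real.rpow_mul hx.le,
      show -(m/r) * r = -m by field_simp]
  rw [eV]
  refine (minkowski_lintegral (volume.restrict (Ioi (0:ℝ))) (volume.restrict (Ioi (0:ℝ)))
    hFm hr).trans ?_
  have inner_bound : ∀ y : ℝ, 0 < y →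
      (∫⁻ x in Ioi (0:ℝ), F (x, y) ^ r) ^ (1/r) ≤ ENNReal.ofReal (CB ^ (1/r)) * g y := by
    intro y hy
    have e1 : ∫⁻ x in Ioi (0:ℝ), F (x, y) ^ r
        = ENNReal.ofReal (y ^ (ap*r)) * g y ^ r *
          ∫⁻ x in Ioi (0:ℝ),
            ENNReal.ofReal ((x ^ 2 + y ^ 2) ^ (-(lam * r / 2))) * ENNReal.ofReal (x ^ (-m)) := by
      rw [← lintegral_const_mul _ (by fun_prop : Measurable fun x : ℝ =>
        ENNReal.ofReal ((x ^ 2 + y ^ 2) ^ (-(lam * r / 2))) * ENNReal.ofReal (x ^ (-m)))]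
      refine setLIntegral_congr_fun measurableSet_Ioi (fun x (hx : 0 < x) => ?_)
      rw [hF]
      simp only []
      rw [ENNReal.mul_rpow_of_nonneg _ _ hr0.le, ENNReal.mul_rpow_of_nonneg _ _ hr0.le,
        ENNReal.mul_rpow_of_nonneg _ _ hr0.le,
        ENNReal.ofReal_rpow_of_pos (Real.rpow_pos_of_pos hx _), ← Real.rpow_mul hx.le,
        show -(m/r) * r = -m by field_simp,
        ENNReal.ofReal_rpow_of_pos (Real.rpow_pos_of_pos (by nlinarith [sq_nonneg x] :
          (0:ℝ) < x ^ 2 + y ^ 2) _),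
        ← Real.rpow_mul (by nlinarith [sq_nonneg x] : (0:ℝ) ≤ x ^ 2 + y ^ 2),
        show -(lam/2) * r = -(lam * r / 2) by ring,
        ENNReal.ofReal_rpow_of_pos (Real.rpow_pos_of_pos hy _), ← Real.rpow_mul hy.le]
      ring
    have e2 : ∫⁻ x in Ioi (0:ℝ),
        ENNReal.ofReal ((x ^ 2 + y ^ 2) ^ (-(lam * r / 2))) * ENNReal.ofReal (x ^ (-m))
        ≤ ENNReal.ofReal (CB * y ^ (1 - lam*r - m)) := by
      have swap : ∫⁻ x in Ioi (0:ℝ),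
          ENNReal.ofReal ((x ^ 2 + y ^ 2) ^ (-(lam * r / 2))) * ENNReal.ofReal (x ^ (-m))
          = ∫⁻ x in Ioi (0:ℝ),
            ENNReal.ofReal ((y ^ 2 + x ^ 2) ^ (-(lam * r / 2))) * ENNReal.ofReal (x ^ (-m)) := by
        refine lintegral_congr fun x => by rw [add_comm (x^2)]
      rw [swap]
      have := Wbound (lam := lam * r) (α := m) (x := y)
        (by positivity) hm0 hm1 (by linarith) hy
      exact this
    calc (∫⁻ x in Ioi (0:ℝ), F (x, y) ^ r) ^ (1/r)
        ≤ (ENNReal.ofReal (y ^ (ap*r)) * g y ^ r * ENNReal.ofReal (CB * y ^ (1 - lam*r - m)))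
            ^ (1/r) := by
          rw [e1]
          exact ENNReal.rpow_le_rpow (mul_le_mul_right e2 _) (by positivity)
      _ = ENNReal.ofReal (CB ^ (1/r)) * g y := by
          rw [ENNReal.mul_rpow_of_nonneg _ _ (by positivity),
            ENNReal.mul_rpow_of_nonneg _ _ (by positivity),
            ENNReal.ofReal_rpow_of_pos (Real.rpow_pos_of_pos hy _),
            ← Real.rpow_mul hy.le,
            ENNReal.ofReal_rpow_of_pos (by positivity),
            Real.mul_rpow hCB0.le (Real.rpow_nonneg hy.le _),
            ← Real.rpow_mul hy.le,
            ← ENNReal.rpow_mul,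
            ENNReal.ofReal_mul (Real.rpow_nonneg hCB0.le _),
            show r * (1/r) = 1 by field_simp, ENNReal.rpow_one]
          have hexp : ap * r * (1/r) + (1 - lam*r - m) * (1/r) = 0 := by
            have h1 : ap * r * (1/r) = ap := by field_simp
            have h2 : (1 - lam*r - m) * (1/r) = (1 - m - lam*r)/r := by ring
            rw [h1, h2]
            linarith [hid]
          have harr : ENNReal.ofReal (y ^ (ap * r * (1/r))) * g y *
              (ENNReal.ofReal (CB ^ (1/r)) * ENNReal.ofReal (y ^ ((1 - lam*r - m) * (1/r))))
              = ENNReal.ofReal (CB ^ (1/r)) *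
                (ENNReal.ofReal (y ^ (ap * r * (1/r))) * ENNReal.ofReal (y ^ ((1 - lam*r - m) * (1/r)))) * g y := by
            ring
          rw [harr, ← ENNReal.ofReal_mul (Real.rpow_nonneg hy.le _), ← Real.rpow_add hy, hexp,
            Real.rpow_zero, ENNReal.ofReal_one, mul_one]
  calc ∫⁻ y in Ioi (0:ℝ), (∫⁻ x in Ioi (0:ℝ), F (x, y) ^ r) ^ (1/r)
      ≤ ∫⁻ y in Ioi (0:ℝ), ENNReal.ofReal (CB ^ (1/r)) * g y :=
        setLIntegral_mono' measurableSet_Ioi fun y hy => inner_bound y hy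
    _ = ENNReal.ofReal (CB ^ (1/r)) * ∫⁻ y in Ioi (0:ℝ), g y :=
        lintegral_const_mul' _ _ ENNReal.ofReal_ne_top


lemma necessity (p q p' lam : ℝ) (hp : 1 < p) (hpq : p ≤ q) (hp' : p' = p / (p - 1))
    (hlam₁ : max (1 / p') (1 / q) < lam) (hlam₂ : lam < 1) (c : ℝ) (hc : 0 < c)
    (hbound : ∀ f : ℝ → ℝ≥0∞, Measurable f →
      (∫⁻ x in Ioi (0:ℝ),
          TK (fun x y => ENNReal.ofReal ((x ^ 2 + y ^ 2) ^ (-(lam / 2)))) f x ^ q) ^ (1 / q) ≤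
        ENNReal.ofReal c * (∫⁻ y in Ioi (0:ℝ), f y ^ p) ^ (1 / p)) :
    1 / q = lam - 1 / p' := by
  set k : ℝ → ℝ → ℝ≥0∞ := fun x y => ENNReal.ofReal ((x ^ 2 + y ^ 2) ^ (-(lam / 2))) with hk
  have hp0 : (0:ℝ) < p := by linarith
  have hq1 : (1:ℝ) < q := lt_of_lt_of_le hp hpq
  have hq0 : (0:ℝ) < q := by linarith
  have hp'0 : (0:ℝ) < p' := by rw [hp']; exact div_pos hp0 (by linarith)
  have hlam0 : (0:ℝ) < lam := lt_trans (lt_of_lt_of_le (by positivity) (le_max_left (1/p') (1/q))) hlam₁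
  have hlamq : (1:ℝ) < lam * q := by
    have h1 : 1 / q < lam := lt_of_le_of_lt (le_max_right (1/p') (1/q)) hlam₁
    rw [div_lt_iff₀ hq0] at h1
    linarith
  set f : ℝ → ℝ≥0∞ := (Ioo (1:ℝ) 2).indicator (fun _ => 1) with hf
  have hfm : Measurable f := measurable_one.indicator measurableSet_Ioo
  set N : ℝ≥0∞ := ∫⁻ x in Ioi (0:ℝ), TK k f x ^ q with hN
  -- lower bound for N
  have hNpos : 0 < N := by
    have low : ∀ x ∈ Ioo (1:ℝ) 2, ENNReal.ofReal ((8:ℝ) ^ (-(lam/2))) ≤ TK k f x := by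
      intro x hx
      have h1 : ∫⁻ y in Ioi (0:ℝ),
          (Ioo (1:ℝ) 2).indicator (fun _ => ENNReal.ofReal ((8:ℝ) ^ (-(lam/2)))) y
          ≤ TK k f x := by
        refine lintegral_mono fun y => ?_
        by_cases hy : y ∈ Ioo (1:ℝ) 2
        · rw [indicator_of_mem hy, hf, indicator_of_mem hy, mul_one, hk]
          refine ENNReal.ofReal_le_ofReal ?_
          refine Real.rpow_le_rpow_of_nonpos (by nlinarith [hx.1, sq_nonneg y]) ?_ (by linarith)
          nlinarith [hx.1, hx.2, hy.1, hy.2]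
        · rw [indicator_of_notMem hy, hf, indicator_of_notMem hy, mul_zero]
      have h2 : ∫⁻ y in Ioi (0:ℝ),
          (Ioo (1:ℝ) 2).indicator (fun _ => ENNReal.ofReal ((8:ℝ) ^ (-(lam/2)))) y
          = ENNReal.ofReal ((8:ℝ) ^ (-(lam/2))) := by
        rw [lintegral_indicator measurableSet_Ioo, setLIntegral_const,
          Measure.restrict_apply measurableSet_Ioo]
        have : Ioo (1:ℝ) 2 ∩ Ioi 0 = Ioo 1 2 := by
          refine inter_eq_left.mpr fun y hy => ?_
          exact lt_trans one_pos hy.1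
        rw [this, Real.volume_Ioo]
        norm_num
      rw [← h2]; exact h1
    have h3 : ∫⁻ x in Ioo (1:ℝ) 2, ENNReal.ofReal ((8:ℝ) ^ (-(lam/2))) ^ q ≤ N := by
      refine le_trans ?_ (lintegral_mono_set (fun x (hx : x ∈ Ioo (1:ℝ) 2) => lt_trans one_pos hx.1))
      refine setLIntegral_mono' measurableSet_Ioo fun x hx => ?_
      exact ENNReal.rpow_le_rpow (low x hx) hq0.le
    refine lt_of_lt_of_le ?_ h3
    rw [setLIntegral_const, Real.volume_Ioo]
    have h8 : (0:ℝ) < (8:ℝ) ^ (-(lam/2)) := Real.rpow_pos_of_pos (by norm_num) _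
    have : (0:ℝ≥0∞) < ENNReal.ofReal ((8:ℝ) ^ (-(lam/2))) ^ q :=
      ENNReal.rpow_pos (ENNReal.ofReal_pos.mpr h8) ENNReal.ofReal_ne_top
    have h9 : (0:ℝ≥0∞) < ENNReal.ofReal (2 - 1) := by norm_num
    exact ENNReal.mul_pos this.ne' h9.ne'
  -- upper bound for N
  have hNfin : N ≠ ⊤ := by
    have up : ∀ x ∈ Ioi (0:ℝ), TK k f x ≤ ENNReal.ofReal ((max x 1) ^ (-lam)) := by
      intro x hx
      have h1 : TK k f x ≤ ∫⁻ y in Ioi (0:ℝ),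
          (Ioo (1:ℝ) 2).indicator (fun _ => ENNReal.ofReal ((max x 1) ^ (-lam))) y := by
        refine lintegral_mono fun y => ?_
        by_cases hy : y ∈ Ioo (1:ℝ) 2
        · rw [indicator_of_mem hy, hf, indicator_of_mem hy, mul_one, hk]
          refine ENNReal.ofReal_le_ofReal ?_
          have hmax : (max x 1) ^ 2 ≤ x ^ 2 + y ^ 2 := by
            rcases le_total 1 x with h | h
            · rw [max_eq_left h]; nlinarith [sq_nonneg y]
            · rw [max_eq_right h]; nlinarith [hy.1, sq_nonneg x]
          calc (x ^ 2 + y ^ 2) ^ (-(lam/2)) ≤ ((max x 1) ^ 2) ^ (-(lam/2)) :=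
                Real.rpow_le_rpow_of_nonpos (by positivity) hmax (by linarith)
            _ = (max x 1) ^ (-lam) := by
                rw [sq_rpow (by positivity : (0:ℝ) ≤ max x 1)]; ring_nf
        · rw [indicator_of_notMem hy, hf, indicator_of_notMem hy, mul_zero]
      refine h1.trans ?_
      rw [lintegral_indicator measurableSet_Ioo, setLIntegral_const,
        Measure.restrict_apply measurableSet_Ioo]
      have : Ioo (1:ℝ) 2 ∩ Ioi 0 = Ioo 1 2 := by
        refine inter_eq_left.mpr fun y hy => ?_
        exact lt_trans one_pos hy.1
      rw [this, Real.volume_Ioo]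
      norm_num
    have h2 : N ≤ ∫⁻ x in Ioi (0:ℝ), ENNReal.ofReal ((max x 1) ^ (-(lam*q))) := by
      rw [hN]
      refine setLIntegral_mono' measurableSet_Ioi fun x hx => ?_
      calc TK k f x ^ q ≤ ENNReal.ofReal ((max x 1) ^ (-lam)) ^ q :=
            ENNReal.rpow_le_rpow (up x hx) hq0.le
        _ = ENNReal.ofReal ((max x 1) ^ (-(lam*q))) := by
            rw [ENNReal.ofReal_rpow_of_pos (Real.rpow_pos_of_pos (by positivity) _),
              ← Real.rpow_mul (by positivity : (0:ℝ) ≤ max x 1)]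
            ring_nf
    refine ne_top_of_le_ne_top ?_ h2
    rw [← Ioc_union_Ioi_eq_Ioi (zero_le_one (α := ℝ)),
      lintegral_union measurableSet_Ioi (Ioc_disjoint_Ioi le_rfl)]
    have e1 : ∫⁻ x in Ioc (0:ℝ) 1, ENNReal.ofReal ((max x 1) ^ (-(lam*q))) = 1 := by
      rw [setLIntegral_congr_fun measurableSet_Ioc
        (fun x (hx : x ∈ Ioc (0:ℝ) 1) => by
          rw [max_eq_right hx.2, Real.one_rpow])]
      simp [Real.volume_Ioc]
    have e2 : ∫⁻ x in Ioi (1:ℝ), ENNReal.ofReal ((max x 1) ^ (-(lam*q)))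
        = ENNReal.ofReal ((1:ℝ) ^ (1 - lam*q) / (lam*q - 1)) := by
      rw [setLIntegral_congr_fun measurableSet_Ioi
        (fun x (hx : x ∈ Ioi (1:ℝ)) => by
          rw [max_eq_left (le_of_lt hx)])]
      exact lint_Ioi_rpow hlamq one_pos
    rw [e1, e2]
    exact ENNReal.add_ne_top.mpr ⟨ENNReal.one_ne_top, ENNReal.ofReal_ne_top⟩
  -- scaling
  have scale : ∀ r : ℝ, 0 < r →
      ENNReal.ofReal (r ^ (1 + (1 - lam) * q)) * N
        = ∫⁻ x in Ioi (0:ℝ), TK k ((Ioo r (2*r)).indicator (fun _ => 1)) x ^ q := by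
    intro r hr
    set fr : ℝ → ℝ≥0∞ := (Ioo r (2*r)).indicator (fun _ => 1) with hfr
    have hfrm : Measurable fr := measurable_one.indicator measurableSet_Ioo
    have hTm : Measurable (TK k fr) := TK_meas hfrm lam
    have point : ∀ u : ℝ, 0 < u →
        TK k fr (r * u) = ENNReal.ofReal (r ^ (1 - lam)) * TK k f u :=
      fun u hu => TK_point_scale hr hu
    have e4 : ∫⁻ x in Ioi (0:ℝ), TK k fr x ^ q
        = ENNReal.ofReal r * ∫⁻ u in Ioi (0:ℝ), TK k fr (r * u) ^ q :=
      lintegral_scale_Ioi _ (hTm.pow_const q) hr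
    have e5 : ∫⁻ u in Ioi (0:ℝ), TK k fr (r * u) ^ q
        = ENNReal.ofReal (r ^ ((1 - lam) * q)) * N := by
      rw [setLIntegral_congr_fun measurableSet_Ioi
        (fun u (hu : u ∈ Ioi (0:ℝ)) => by
          rw [point u hu, ENNReal.mul_rpow_of_nonneg _ _ hq0.le,
            ENNReal.ofReal_rpow_of_pos (Real.rpow_pos_of_pos hr _),
            ← Real.rpow_mul hr.le])]
      rw [lintegral_const_mul' _ _ ENNReal.ofReal_ne_top, hN]
    rw [e4, e5, ← mul_assoc, ← ENNReal.ofReal_mul hr.le]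
    congr 2
    rw [show (1:ℝ) + (1-lam)*q = 1 + ((1-lam)*q) by ring, Real.rpow_add hr, Real.rpow_one]
  -- apply the bound
  have main : ∀ r : ℝ, 0 < r →
      ENNReal.ofReal (r ^ ((1 + (1 - lam) * q)/q)) * N ^ (1/q)
        ≤ ENNReal.ofReal (c * r ^ (1/p)) := by
    intro r hr
    have hfrm : Measurable ((Ioo r (2*r)).indicator (fun _ => (1:ℝ≥0∞))) :=
      measurable_one.indicator measurableSet_Ioo
    have hb := hbound _ hfrm
    have eR : ∫⁻ y in Ioi (0:ℝ), ((Ioo r (2*r)).indicator (fun _ => (1:ℝ≥0∞))) y ^ p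
        = ENNReal.ofReal r := by
      have : ∀ y : ℝ, ((Ioo r (2*r)).indicator (fun _ => (1:ℝ≥0∞))) y ^ p
          = ((Ioo r (2*r)).indicator (fun _ => (1:ℝ≥0∞))) y := by
        intro y
        by_cases hy : y ∈ Ioo r (2*r)
        · rw [indicator_of_mem hy, ENNReal.one_rpow]
        · rw [indicator_of_notMem hy, ENNReal.zero_rpow_of_pos hp0]
      rw [lintegral_congr this, lintegral_indicator measurableSet_Ioo, setLIntegral_const,
        Measure.restrict_apply measurableSet_Ioo]
      have : Ioo r (2*r) ∩ Ioi 0 = Ioo r (2*r) :=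
        inter_eq_left.mpr fun y hy => lt_trans hr hy.1
      rw [this, Real.volume_Ioo, one_mul]
      congr 1
      ring
    rw [eR, ← scale r hr] at hb
    calc ENNReal.ofReal (r ^ ((1 + (1 - lam) * q)/q)) * N ^ (1/q)
        = (ENNReal.ofReal (r ^ (1 + (1 - lam) * q)) * N) ^ (1/q) := by
          rw [ENNReal.mul_rpow_of_nonneg _ _ (by positivity),
            ENNReal.ofReal_rpow_of_pos (Real.rpow_pos_of_pos hr _),
            ← Real.rpow_mul hr.le, mul_one_div]
      _ ≤ ENNReal.ofReal c * (ENNReal.ofReal r) ^ (1/p) := hb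
      _ = ENNReal.ofReal (c * r ^ (1/p)) := by
          rw [ENNReal.ofReal_rpow_of_pos hr, ← ENNReal.ofReal_mul hc.le]
  -- extract real inequality
  set n : ℝ := (N ^ (1/q)).toReal with hn
  have hNq_fin : N ^ (1/q) ≠ ⊤ := ENNReal.rpow_ne_top_of_nonneg (by positivity) hNfin
  have hNq_pos : 0 < N ^ (1/q) := ENNReal.rpow_pos hNpos hNfin
  have hn0 : 0 < n := ENNReal.toReal_pos hNq_pos.ne' hNq_fin
  have realmain : ∀ r : ℝ, 0 < r → r ^ ((1 + (1 - lam) * q)/q) * n ≤ c * r ^ (1/p) := by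
    intro r hr
    have h1 := main r hr
    have h2 := ENNReal.toReal_mono ENNReal.ofReal_ne_top h1
    rw [ENNReal.toReal_mul, ENNReal.toReal_ofReal (by positivity),
      ENNReal.toReal_ofReal (by positivity)] at h2
    exact h2
  -- conclude exponent equality
  have hA : (1 + (1 - lam) * q)/q = 1/p := by
    by_contra hne
    have key : ∀ r : ℝ, 0 < r → r ^ ((1 + (1 - lam) * q)/q - 1/p) ≤ c / n := by
      intro r hr
      have h1 := realmain r hr
      have h2 : r ^ ((1 + (1 - lam) * q)/q) = r ^ ((1 + (1 - lam) * q)/q - 1/p) * r ^ (1/p) := by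
        rw [← Real.rpow_add hr]; ring_nf
      rw [h2] at h1
      have h3 : r ^ ((1 + (1 - lam) * q)/q - 1/p) * n ≤ c := by
        have hrp : (0:ℝ) < r ^ (1/p) := Real.rpow_pos_of_pos hr _
        nlinarith [h1, hrp]
      rw [le_div_iff₀ hn0]
      exact h3
    set δ : ℝ := (1 + (1 - lam) * q)/q - 1/p with hδ
    have hδ0 : δ ≠ 0 := sub_ne_zero.mpr hne
    have hpos : (0:ℝ) < c / n + 1 := by positivity
    have h4 := key ((c/n + 1) ^ (1/δ)) (Real.rpow_pos_of_pos hpos _)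
    rw [← Real.rpow_mul hpos.le, one_div, inv_mul_cancel₀ hδ0, Real.rpow_one] at h4
    linarith
  have h1p' : 1/p' = 1 - 1/p := by
    rw [hp']
    field_simp
  have hfin : (1 + (1 - lam) * q)/q = 1/q + (1 - lam) := by
    field_simp
  rw [hfin] at hA
  rw [h1p']
  linarith

lemma final_alg {CA CB w r q p p' : ℝ} (hCA0 : 0 < CA) (hCB0 : 0 < CB)
    (hwq : w * (1/q) = 1/p') (hrp : (1/r) * (1/p) = 1/q) (hrq : r * (1/q) = 1/p)
    (hq0 : 0 < q) (hp0 : 0 < p) (Ip : ℝ≥0∞) :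
    (ENNReal.ofReal (CA ^ w) * (ENNReal.ofReal (CB ^ (1/r)) * Ip) ^ r) ^ (1/q)
      = ENNReal.ofReal (CA ^ (1/p') * CB ^ (1/q)) * Ip ^ (1/p) := by
  have eCA : (ENNReal.ofReal (CA ^ w)) ^ (1/q) = ENNReal.ofReal (CA ^ (1/p')) := by
    rw [ENNReal.ofReal_rpow_of_pos (Real.rpow_pos_of_pos hCA0 w),
      ← Real.rpow_mul hCA0.le, hwq]
  have eCB : (ENNReal.ofReal (CB ^ (1/r))) ^ (1/p) = ENNReal.ofReal (CB ^ (1/q)) := by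
    rw [ENNReal.ofReal_rpow_of_pos (Real.rpow_pos_of_pos hCB0 (1/r)),
      ← Real.rpow_mul hCB0.le, hrp]
  rw [ENNReal.mul_rpow_of_nonneg _ _ (le_of_lt (by positivity : (0:ℝ) < 1/q)),
    ← ENNReal.rpow_mul (ENNReal.ofReal (CB ^ (1/r)) * Ip), hrq,
    ENNReal.mul_rpow_of_nonneg _ _ (le_of_lt (by positivity : (0:ℝ) < 1/p)), eCA, eCB,
    ENNReal.ofReal_mul (Real.rpow_nonneg hCA0.le _)]
  ring

lemma sufficiency (p q p' lam : ℝ) (hp : 1 < p) (hpq : p ≤ q) (hp' : p' = p / (p - 1))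
    (hlam₁ : max (1 / p') (1 / q) < lam) (hlam₂ : lam < 1) (hE : 1 / q = lam - 1 / p') :
    ∃ c > 0, ∀ f : ℝ → ℝ≥0∞, Measurable f →
      (∫⁻ x in Ioi (0:ℝ),
          TK (fun x y => ENNReal.ofReal ((x ^ 2 + y ^ 2) ^ (-(lam / 2)))) f x ^ q) ^ (1 / q) ≤
        ENNReal.ofReal c * (∫⁻ y in Ioi (0:ℝ), f y ^ p) ^ (1 / p) := by
  -- basic facts
  have hp0 : (0:ℝ) < p := by linarith
  have hq1 : (1:ℝ) < q := lt_of_lt_of_le hp hpq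
  have hq0 : (0:ℝ) < q := by linarith
  have hp'0 : (0:ℝ) < p' := by rw [hp']; exact div_pos hp0 (by linarith)
  have hpp' : Real.HolderConjugate p p' := (Real.holderConjugate_iff_eq_conjExponent hp).mpr hp'
  have hinv : 1/p + 1/p' = 1 := by
    rw [one_div, one_div]; exact hpp'.inv_add_inv_eq_one
  have hlam0 : (0:ℝ) < lam :=
    lt_trans (lt_of_lt_of_le (by positivity) (le_max_left (1/p') (1/q))) hlam₁
  have hZ0 : (0:ℝ) < lam * q - 1 := by
    have h1 : 1 / q < lam := lt_of_le_of_lt (le_max_right (1/p') (1/q)) hlam₁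
    rw [div_lt_iff₀ hq0] at h1
    linarith
  have hplq : p < q := by
    have h1 : 1/q < 1/p := by linarith
    have h5 := mul_lt_mul_of_pos_left h1 (mul_pos hp0 hq0)
    have he1 : p*q*(1/q) = p := by field_simp
    have he2 : p*q*(1/p) = q := by field_simp
    linarith [h5, he1.symm.trans_le le_rfl]
  have h2 : 1/p' = lam - 1/q := by linarith
  have h1p : 1/p = 1 - lam + 1/q := by linarith
  -- constants
  set ε : ℝ := min (lam/2) (1/(2*(lam*q-1))) with hεdef
  have hε0 : 0 < ε := lt_min (by linarith) (by positivity)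
  have hεlam : ε ≤ lam/2 := min_le_left _ _
  set w : ℝ := q/p' with hwdef
  have hw0 : 0 < w := div_pos hq0 hp'0
  have hw_eq : w = lam*q - 1 := by
    rw [hwdef]
    rw [div_eq_mul_inv, ← one_div, h2]
    field_simp
  set m : ℝ := ε * w with hmdef
  have hm0 : 0 < m := mul_pos hε0 hw0
  have hm1 : m ≤ 1/2 := by
    rcases le_total (lam/2) (1/(2*(lam*q-1))) with hc | hc
    · have hεeq : ε = lam/2 := min_eq_left hc
      rw [hmdef, hεeq, hw_eq]
      rw [le_div_iff₀ (by positivity : (0:ℝ) < 2*(lam*q-1))] at hc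
      nlinarith [hc]
    · have hεeq : ε = 1/(2*(lam*q-1)) := min_eq_right hc
      rw [hmdef, hεeq, hw_eq, div_mul_eq_mul_div, one_mul,
        div_le_iff₀ (by positivity : (0:ℝ) < 2*(lam*q-1))]
      linarith
  have hm1' : m < 1 := lt_of_le_of_lt hm1 one_half_lt_one
  set r : ℝ := q/p with hrdef
  have hr1 : 1 < r := (one_lt_div hp0).mpr hplq
  have hr0 : 0 < r := by linarith
  have hr_eq : r = q*(1-lam) + 1 := by
    have hq' : q * (1/q) = 1 := by field_simp
    calc r = q * (1/p) := by rw [hrdef]; ring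
      _ = q * (1 - lam + 1/q) := by rw [h1p]
      _ = q*(1-lam) + q*(1/q) := by ring
      _ = q*(1-lam) + 1 := by rw [hq']
  set α : ℝ := 1 - lam + ε with hαdef
  have hα0 : 0 < α := by rw [hαdef]; linarith
  have hα1 : α < 1 := by rw [hαdef]; linarith
  have hαs : 1 < lam + α := by rw [hαdef]; linarith
  set a : ℝ := α/p' with hadef
  have hap' : a * p' = α := by rw [hadef]; field_simp
  have hmlr : 1 < m + lam*r := by
    rw [hmdef, hw_eq, hr_eq]
    nlinarith [mul_pos hε0 hZ0, mul_nonneg (by linarith : (0:ℝ) ≤ 1-lam) hZ0.le]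
  have h3 : a*p*r = α*w := by
    rw [hadef, hrdef, hwdef]
    field_simp
  have h4 : α*w = lam*r + m - 1 := by
    have h4a : α*w = (1-lam)*w + ε*w := by rw [hαdef]; ring
    have h6 : (1-lam)*w = lam*r - 1 := by rw [hw_eq, hr_eq]; ring
    rw [h4a, hmdef]
    linarith [h6]
  have hid : a*p + (1 - m - lam*r)/r = 0 := by
    have h7 : (1 - m - lam*r)/r = -(a*p) := by
      rw [div_eq_iff hr0.ne']
      have h8 : a*p*r = lam*r + m - 1 := h3.trans h4
      linarith [h8]
    rw [h7]
    ring
  set CA : ℝ := 1/(1-α) + 1/(lam+α-1) with hCAdef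
  have hCA0 : 0 < CA := by
    have hh1 : (0:ℝ) < 1-α := by linarith
    have hh2 : (0:ℝ) < lam+α-1 := by linarith
    positivity
  set CB : ℝ := 1/(1-m) + 1/(lam*r+m-1) with hCBdef
  have hCB0 : 0 < CB := by
    have hh1 : (0:ℝ) < 1-m := by linarith
    have hh2 : (0:ℝ) < lam*r+m-1 := by linarith
    positivity
  have hwq : w * (1/q) = 1/p' := by rw [hwdef]; field_simp; try ring
  have hrq : r * (1/q) = 1/p := by rw [hrdef]; field_simp; try ring
  have hrp : (1/r) * (1/p) = 1/q := by rw [hrdef]; field_simp; try ring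
  have hpr : 1/p * q = r := by rw [hrdef]; field_simp; try ring
  have hp'q : 1/p' * q = w := by rw [hwdef]; field_simp; try ring
  refine ⟨CA ^ (1/p') * CB ^ (1/q), by positivity, fun f hf => ?_⟩
  set k : ℝ → ℝ → ℝ≥0∞ := fun x y => ENNReal.ofReal ((x ^ 2 + y ^ 2) ^ (-(lam / 2))) with hk
  set G : ℝ → ℝ≥0∞ := fun x =>
    ∫⁻ y in Ioi (0:ℝ), k x y * ENNReal.ofReal (y ^ (a*p)) * f y ^ p with hG
  set Ip : ℝ≥0∞ := ∫⁻ y in Ioi (0:ℝ), f y ^ p with hIp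
  set V : ℝ≥0∞ := ∫⁻ x in Ioi (0:ℝ), ENNReal.ofReal (x ^ (-m)) * G x ^ r with hV
  -- pointwise bound
  have step_point : ∀ x : ℝ, 0 < x →
      TK k f x ^ q ≤ ENNReal.ofReal (CA ^ w) * (ENNReal.ofReal (x ^ (-m)) * G x ^ r) := by
    intro x hx
    have hH := holder_step (p := p) (p' := p') (a := a) (lam := lam) hpp' hf hx
    have hW : (∫⁻ y in Ioi (0:ℝ), k x y * ENNReal.ofReal (y ^ (-(a*p'))))
        ≤ ENNReal.ofReal (CA * x ^ (-ε)) := by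
      have hWb := Wbound (lam := lam) (α := α) (x := x) hlam0 hα0 hα1 hαs hx
      rw [hap']
      refine le_trans (le_of_eq rfl) (hWb.trans (le_of_eq ?_))
      rw [hCAdef]
      congr 2
      rw [hαdef]
      ring
    calc TK k f x ^ q
        ≤ (G x ^ (1/p) * (∫⁻ y in Ioi (0:ℝ), k x y * ENNReal.ofReal (y ^ (-(a*p')))) ^ (1/p')) ^ q :=
          ENNReal.rpow_le_rpow hH hq0.le
      _ = G x ^ r * ((∫⁻ y in Ioi (0:ℝ), k x y * ENNReal.ofReal (y ^ (-(a*p')))) ^ (1/p')) ^ q := by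
          rw [ENNReal.mul_rpow_of_nonneg _ _ hq0.le, ← ENNReal.rpow_mul,
            hpr]
      _ ≤ G x ^ r * (ENNReal.ofReal (CA * x ^ (-ε))) ^ w := by
          refine mul_le_mul_right ?_ _
          rw [← ENNReal.rpow_mul, hp'q]
          exact ENNReal.rpow_le_rpow hW hw0.le
      _ = ENNReal.ofReal (CA ^ w) * (ENNReal.ofReal (x ^ (-m)) * G x ^ r) := by
          rw [ENNReal.ofReal_rpow_of_pos (by positivity),
            Real.mul_rpow hCA0.le (Real.rpow_nonneg hx.le _),
            ← Real.rpow_mul hx.le, show -ε * w = -m by rw [hmdef]; ring,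
            ENNReal.ofReal_mul (Real.rpow_nonneg hCA0.le _)]
          ring
  -- integrate
  have step_Q : (∫⁻ x in Ioi (0:ℝ), TK k f x ^ q) ≤ ENNReal.ofReal (CA ^ w) * V := by
    rw [hV, ← lintegral_const_mul' _ _ ENNReal.ofReal_ne_top]
    exact setLIntegral_mono' measurableSet_Ioi fun x hx => step_point x hx
  -- Minkowski step
  have step_M : V ^ (1/r) ≤ ENNReal.ofReal (CB ^ (1/r)) * Ip := by
    have hM := mink_step (lam := lam) (m := m) (r := r) (ap := a*p) hr1 hm0 hm1' hlam0
      (by linarith) hid (hf.pow_const p)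
    exact hM
  have step_V : V ≤ (ENNReal.ofReal (CB ^ (1/r)) * Ip) ^ r := by
    have hVr : V = (V ^ (1/r)) ^ r := by
      rw [← ENNReal.rpow_mul, one_div, inv_mul_cancel₀ hr0.ne', ENNReal.rpow_one]
    rw [hVr]
    exact ENNReal.rpow_le_rpow step_M hr0.le
  -- final assembly
  calc (∫⁻ x in Ioi (0:ℝ), TK k f x ^ q) ^ (1/q)
      ≤ (ENNReal.ofReal (CA ^ w) * (ENNReal.ofReal (CB ^ (1/r)) * Ip) ^ r) ^ (1/q) :=
        ENNReal.rpow_le_rpow (step_Q.trans (mul_le_mul_right step_V _)) (by positivity)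
    _ = ENNReal.ofReal (CA ^ (1/p') * CB ^ (1/q)) * Ip ^ (1/p) :=
        final_alg hCA0 hCB0 hwq hrp hrq hq0 hp0 Ip

theorem statement15
    (p q p' lam : ℝ) (hp : 1 < p) (hpq : p ≤ q) (hp' : p' = p / (p - 1))
    (hlam₁ : max (1 / p') (1 / q) < lam) (hlam₂ : lam < 1) :
    (∃ c > 0, ∀ f : ℝ → ℝ≥0∞, Measurable f →
      (∫⁻ x in Ioi (0:ℝ),
          TK (fun x y => ENNReal.ofReal ((x ^ 2 + y ^ 2) ^ (-(lam / 2)))) f x ^ q) ^ (1 / q) ≤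
        ENNReal.ofReal c * (∫⁻ y in Ioi (0:ℝ), f y ^ p) ^ (1 / p)) ↔
    1 / q = lam - 1 / p' := by
  constructor
  · rintro ⟨c, hc, hb⟩
    exact necessity p q p' lam hp hpq hp' hlam₁ hlam₂ c hc hb
  · intro hE
    exact sufficiency p q p' lam hp hpq hp' hlam₁ hlam₂ hE

end
end

section
/- Let K ∈ M_+(ℝ_+×ℝ_+) be homogeneous of degree −1, i.e., K(λx, λy) = λ^{-1} K(x,y) for all λ, x, y ∈ ℝ_+. Let Φ₁, Φ₂ be N-functions and u₁, u₂ weights, and define the dilation function h(t) = inf{ M > 0 : ρ_{Φ₁,u₁}( s ↦ f(ts) ) ≤ M ρ_{Φ₂,u₂}(f) for all f ∈ M_+(ℝ_+) } for t ∈ ℝ_+. If ∫_{ℝ_+} K(1,t) h(t) dt < ∞, then there is C > 0, independent of f, with ρ_{Φ₁,u₁}(T_K f) ≤ C ρ_{Φ₂,u₂}(f) for all f ∈ M_+(ℝ_+). In particular, one has the pointwise identity (T_K f)(x) = ∫_{ℝ_+} K(1,t) f(tx) dt for all x ∈ ℝ_+. -/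
open MeasureTheory Set
open scoped ENNReal

noncomputable section

lemma lint_scale (x : ℝ) (hx : 0 < x) (g : ℝ → ℝ≥0∞) (hg : Measurable g) :
    ∫⁻ y in Ioi (0:ℝ), g y = ENNReal.ofReal x * ∫⁻ t in Ioi (0:ℝ), g (x * t) := by
  have hT : Measurable fun t : ℝ => x * t := measurable_const_mul x
  have hpre : (fun t : ℝ => x * t) ⁻¹' Ioi 0 = Ioi 0 := by
    ext t; simp [mul_pos_iff_of_pos_left, hx]
  have hmap : Measure.map (fun t : ℝ => x * t) (volume.restrict (Ioi 0))
      = ENNReal.ofReal x⁻¹ • volume.restrict (Ioi 0) := by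
    rw [← hpre, ← Measure.restrict_map hT measurableSet_Ioi,
      Real.map_volume_mul_left hx.ne', hpre, Measure.restrict_smul,
      abs_of_pos (inv_pos.2 hx)]
  have h1 : ∫⁻ t in Ioi (0:ℝ), g (x * t) = ENNReal.ofReal x⁻¹ * ∫⁻ y in Ioi (0:ℝ), g y := by
    rw [← lintegral_map hg hT, hmap, lintegral_smul_measure, smul_eq_mul]
  rw [h1, ← mul_assoc, ← ENNReal.ofReal_mul hx.le, mul_inv_cancel₀ hx.ne', ENNReal.ofReal_one,
    one_mul]

lemma TK_eq (K : ℝ → ℝ → ℝ≥0∞) (hK : Measurable (Function.uncurry K))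
    (hhom : ∀ l > 0, ∀ x > 0, ∀ y > 0, K (l * x) (l * y) = K x y / ENNReal.ofReal l)
    (f : ℝ → ℝ≥0∞) (hf : Measurable f) (x : ℝ) (hx : 0 < x) :
    TK K f x = ∫⁻ t in Ioi (0:ℝ), K 1 t * f (t * x) := by
  have hK1 : Measurable fun t : ℝ => K 1 t := hK.comp (measurable_prodMk_left)
  set g : ℝ → ℝ≥0∞ := fun y => K 1 (y / x) * f y / ENNReal.ofReal x with hgdef
  have hg : Measurable g :=
    ((hK1.comp (measurable_id.div_const x)).mul hf).div_const _
  have h0 : TK K f x = ∫⁻ y in Ioi (0:ℝ), g y := by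
    refine setLIntegral_congr_fun measurableSet_Ioi (fun y hy => ?_)
    have h1 : K x y = K 1 (y / x) / ENNReal.ofReal x := by
      have := hhom x hx 1 one_pos (y / x) (div_pos hy hx)
      rw [mul_one, mul_div_cancel₀ _ hx.ne'] at this
      exact this
    rw [hgdef]
    simp only [h1]
    rw [div_eq_mul_inv, div_eq_mul_inv, mul_right_comm]
    rfl
  rw [h0, lint_scale x hx g hg]
  have h2 : ∀ t ∈ Ioi (0:ℝ), g (x * t) = K 1 t * f (t * x) / ENNReal.ofReal x := by
    intro t ht
    rw [hgdef]
    simp only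
    rw [mul_div_cancel_left₀ _ hx.ne', mul_comm x t, mul_div_assoc]
  rw [setLIntegral_congr_fun measurableSet_Ioi h2]
  have hxne : ENNReal.ofReal x ≠ 0 := by simp [hx]
  have hxnt : ENNReal.ofReal x ≠ ⊤ := ENNReal.ofReal_ne_top
  simp_rw [div_eq_mul_inv]
  rw [lintegral_mul_const' _ _ (by simp [hxne])]
  rw [mul_comm (ENNReal.ofReal x), mul_assoc, ENNReal.inv_mul_cancel hxne hxnt, mul_one]

variable {F φ : ℝ → ℝ}

lemma nf_phi_pos (h : IsNFunction F φ) {x : ℝ} (hx : 0 < x) : 0 < φ x := h.2.1 hx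

lemma nf_zero (h : IsNFunction F φ) : F 0 = 0 := by
  rw [h.2.2.2 0 le_rfl, intervalIntegral.integral_same]

lemma nf_intble_le (h : IsNFunction F φ) {a b : ℝ} (ha : 0 ≤ a) (hab : a ≤ b) :
    IntervalIntegrable φ volume a b := by
  rw [intervalIntegrable_iff, uIoc_of_le hab]
  rcases eq_or_lt_of_le hab with rfl | hlt
  · simp
  have hb : 0 < b := ha.trans_lt hlt
  have hmono : MonotoneOn φ (Ioc a b) := by
    refine (h.1.monotoneOn).mono ?_
    intro t ht; exact lt_of_le_of_lt ha ht.1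
  have haem : AEMeasurable φ (volume.restrict (Ioc a b)) :=
    aemeasurable_restrict_of_monotoneOn measurableSet_Ioc hmono
  refine Integrable.mono' (integrable_const (φ b)) haem.aestronglyMeasurable ?_
  refine (ae_restrict_iff' measurableSet_Ioc).2 (ae_of_all _ fun t ht => ?_)
  have htpos : 0 < t := lt_of_le_of_lt ha ht.1
  have h1 : 0 < φ t := nf_phi_pos h htpos
  have h2 : φ t ≤ φ b := hmono ht ⟨hlt, le_rfl⟩ ht.2
  rw [Real.norm_eq_abs, abs_of_pos h1]; exact h2

lemma nf_intble (h : IsNFunction F φ) {a b : ℝ} (ha : 0 ≤ a) (hb : 0 ≤ b) :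
    IntervalIntegrable φ volume a b := by
  rcases le_total a b with hab | hab
  · exact nf_intble_le h ha hab
  · exact (nf_intble_le h hb hab).symm

lemma nf_diff (h : IsNFunction F φ) {x y : ℝ} (hx : 0 ≤ x) (hy : 0 ≤ y) :
    F y - F x = ∫ t in x..y, φ t := by
  rw [h.2.2.2 x hx, h.2.2.2 y hy]
  rw [← intervalIntegral.integral_add_adjacent_intervals (nf_intble h le_rfl hx)
    (nf_intble h hx hy)]
  ring

/-- Convexity inequality: the graph of `F` lies above the tangent at `x`. -/
lemma nf_convex (h : IsNFunction F φ) {x y : ℝ} (hx : 0 < x) (hy : 0 ≤ y) :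
    F x + φ x * (y - x) ≤ F y := by
  have key := nf_diff h hx.le hy
  rcases le_total x y with hxy | hxy
  · have hcomp : ∀ t ∈ Icc x y, (fun _ => φ x) t ≤ φ t := by
      intro t ht
      rcases eq_or_lt_of_le ht.1 with rfl | hlt
      · exact le_rfl
      · exact ((h.1) hx (hx.trans hlt) hlt).le
    have := intervalIntegral.integral_mono_on hxy
      (intervalIntegrable_const) (nf_intble h hx.le hy) hcomp
    rw [intervalIntegral.integral_const] at this
    have : (y - x) * φ x ≤ ∫ t in x..y, φ t := by simpa using this
    nlinarith [key]
  · -- y ≤ x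
    have h0 : ∀ᵐ t : ℝ, t ≠ 0 := by
      refine ae_iff.2 ?_
      have : {t : ℝ | ¬t ≠ 0} = {0} := by ext t; simp
      rw [this]; exact Real.volume_singleton
    have hcomp : φ ≤ᵐ[volume.restrict (Icc y x)] fun _ => φ x := by
      refine (ae_restrict_iff' measurableSet_Icc).2 ?_
      filter_upwards [h0] with t ht0 hmem
      have htpos : 0 < t := lt_of_le_of_ne (hy.trans hmem.1) (Ne.symm ht0)
      rcases eq_or_lt_of_le hmem.2 with rfl | hlt
      · exact le_rfl
      · exact ((h.1) htpos hx hlt).le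
    have hle := intervalIntegral.integral_mono_ae_restrict hxy
      (nf_intble h hy hx.le) (intervalIntegrable_const) hcomp
    rw [intervalIntegral.integral_const] at hle
    have hsymm : ∫ t in x..y, φ t = -∫ t in y..x, φ t := intervalIntegral.integral_symm y x
    have hle' : ∫ t in y..x, φ t ≤ (x - y) * φ x := by simpa using hle
    nlinarith [key, hsymm]

lemma nf_nonneg (h : IsNFunction F φ) {x : ℝ} (hx : 0 ≤ x) : 0 ≤ F x := by
  have key := nf_diff h le_rfl hx
  rw [nf_zero h, sub_zero] at key
  rw [key]
  refine intervalIntegral.integral_nonneg_of_ae_restrict hx ?_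
  have h0 : ∀ᵐ t : ℝ, t ≠ 0 := by
    refine ae_iff.2 ?_
    have : {t : ℝ | ¬t ≠ 0} = {0} := by ext t; simp
    rw [this]; exact Real.volume_singleton
  refine (ae_restrict_iff' measurableSet_Icc).2 ?_
  filter_upwards [h0] with t ht0 hmem
  exact (nf_phi_pos h (lt_of_le_of_ne hmem.1 (Ne.symm ht0))).le

lemma nf_mono (h : IsNFunction F φ) {x y : ℝ} (hx : 0 ≤ x) (hxy : x ≤ y) : F x ≤ F y := by
  have key := nf_diff h hx (hx.trans hxy)
  have : (0:ℝ) ≤ ∫ t in x..y, φ t := by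
    refine intervalIntegral.integral_nonneg_of_ae_restrict hxy ?_
    have h0 : ∀ᵐ t : ℝ, t ≠ 0 := by
      refine ae_iff.2 ?_
      have : {t : ℝ | ¬t ≠ 0} = {0} := by ext t; simp
      rw [this]; exact Real.volume_singleton
    refine (ae_restrict_iff' measurableSet_Icc).2 ?_
    filter_upwards [h0] with t ht0 hmem
    exact (nf_phi_pos h (lt_of_le_of_ne (hx.trans hmem.1) (Ne.symm ht0))).le
  linarith

lemma extE_mono (h : IsNFunction F φ) : Monotone (extE F) := by
  intro a b hab
  unfold extE
  rcases eq_or_ne b ⊤ with rfl | hb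
  · simp
  · have ha : a ≠ ⊤ := fun hc => hb (top_le_iff.1 (hc ▸ hab))
    rw [if_neg ha, if_neg hb]
    exact ENNReal.ofReal_le_ofReal
      (nf_mono h ENNReal.toReal_nonneg (ENNReal.toReal_mono hb hab))

lemma extE_meas (h : IsNFunction F φ) : Measurable (extE F) := (extE_mono h).measurable

lemma extE_zero (h : IsNFunction F φ) : extE F 0 = 0 := by
  simp [extE, nf_zero h]

lemma nf_slope_nonneg (h : IsNFunction F φ) {x : ℝ} (hx : 0 < x) : 0 ≤ φ x * x - F x := by
  have h1 := nf_convex h hx (le_refl 0)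
  have h2 := nf_zero h
  nlinarith

lemma nf_young (h : IsNFunction F φ) {x : ℝ} (hx : 0 < x) (a : ℝ≥0∞) :
    ENNReal.ofReal (φ x) * a ≤ extE F a + ENNReal.ofReal (φ x * x - F x) := by
  rcases eq_or_ne a ⊤ with rfl | ha
  · have : extE F ⊤ = ⊤ := by simp [extE]
    rw [this]; simp
  · have hr : (0:ℝ) ≤ a.toReal := ENNReal.toReal_nonneg
    rw [extE, if_neg ha]
    calc ENNReal.ofReal (φ x) * a = ENNReal.ofReal (φ x * a.toReal) := by
          rw [ENNReal.ofReal_mul (nf_phi_pos h hx).le, ENNReal.ofReal_toReal ha]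
      _ ≤ ENNReal.ofReal (F a.toReal + (φ x * x - F x)) := by
          refine ENNReal.ofReal_le_ofReal ?_
          have := nf_convex h hx hr
          nlinarith
      _ = ENNReal.ofReal (F a.toReal) + ENNReal.ofReal (φ x * x - F x) :=
          ENNReal.ofReal_add (nf_nonneg h hr) (nf_slope_nonneg h hx)

lemma nf_jensen (h : IsNFunction F φ) (μ : Measure ℝ) (w g : ℝ → ℝ≥0∞)
    (hw : Measurable w) (hwm : (∫⁻ t, w t ∂μ) ≤ 1) :
    extE F (∫⁻ t, g t * w t ∂μ) ≤ ∫⁻ t, extE F (g t) * w t ∂μ := by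
  set A := ∫⁻ t, g t * w t ∂μ with hA
  set R := ∫⁻ t, extE F (g t) * w t ∂μ with hR
  -- generic integration step from Young's inequality at a point x > 0
  have key : ∀ x : ℝ, 0 < x →
      ENNReal.ofReal (φ x) * A ≤ R + ENNReal.ofReal (φ x * x - F x) := by
    intro x hx
    have hpt : ∀ t, ENNReal.ofReal (φ x) * (g t * w t) ≤
        extE F (g t) * w t + ENNReal.ofReal (φ x * x - F x) * w t := by
      intro t
      calc ENNReal.ofReal (φ x) * (g t * w t) = (ENNReal.ofReal (φ x) * g t) * w t := by ring
        _ ≤ (extE F (g t) + ENNReal.ofReal (φ x * x - F x)) * w t :=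
            mul_le_mul_left (nf_young h hx (g t)) _
        _ = extE F (g t) * w t + ENNReal.ofReal (φ x * x - F x) * w t := by ring
    calc ENNReal.ofReal (φ x) * A = ∫⁻ t, ENNReal.ofReal (φ x) * (g t * w t) ∂μ :=
          (lintegral_const_mul' _ _ ENNReal.ofReal_ne_top).symm
      _ ≤ ∫⁻ t, (extE F (g t) * w t + ENNReal.ofReal (φ x * x - F x) * w t) ∂μ :=
          lintegral_mono hpt
      _ = R + ∫⁻ t, ENNReal.ofReal (φ x * x - F x) * w t ∂μ :=
          lintegral_add_right' _ ((hw.const_mul _).aemeasurable)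
      _ = R + ENNReal.ofReal (φ x * x - F x) * ∫⁻ t, w t ∂μ := by
          rw [lintegral_const_mul _ hw]
      _ ≤ R + ENNReal.ofReal (φ x * x - F x) * 1 := by
          exact add_le_add_right (mul_le_mul_right hwm _) R
      _ = R + ENNReal.ofReal (φ x * x - F x) := by rw [mul_one]
  rcases eq_or_ne A 0 with hA0 | hA0
  · rw [hA0, extE_zero h]; exact zero_le
  rcases eq_or_ne A ⊤ with hAt | hAt
  · -- A = ⊤ : R must be ⊤
    have h1 := key 1 one_pos
    rw [hAt, ENNReal.mul_top (by simp [nf_phi_pos h one_pos])] at h1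
    have : R + ENNReal.ofReal (φ 1 * 1 - F 1) = ⊤ := top_le_iff.1 h1
    have hR' : R = ⊤ := by
      by_contra hc
      exact (ENNReal.add_ne_top.2 ⟨hc, ENNReal.ofReal_ne_top⟩) this
    rw [hAt, hR']
    simp [extE]
  · -- 0 < A < ⊤
    have hx : 0 < A.toReal := ENNReal.toReal_pos hA0 hAt
    have hkey := key A.toReal hx
    have hAre : A = ENNReal.ofReal A.toReal := (ENNReal.ofReal_toReal hAt).symm
    rw [extE, if_neg hAt]
    have h2 : ENNReal.ofReal (φ A.toReal * A.toReal) ≤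
        R + ENNReal.ofReal (φ A.toReal * A.toReal - F A.toReal) := by
      calc ENNReal.ofReal (φ A.toReal * A.toReal)
          = ENNReal.ofReal (φ A.toReal) * A := by
            rw [ENNReal.ofReal_mul (nf_phi_pos h hx).le, ← hAre]
        _ ≤ _ := hkey
    have h3 := tsub_le_iff_right.2 h2
    calc ENNReal.ofReal (F A.toReal)
        = ENNReal.ofReal (φ A.toReal * A.toReal) -
            ENNReal.ofReal (φ A.toReal * A.toReal - F A.toReal) := by
          rw [← ENNReal.ofReal_sub _ (nf_slope_nonneg h hx)]
          ring_nf
      _ ≤ R := h3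

/-- The modular. -/
def modF (F : ℝ → ℝ) (u : ℝ → ℝ) (g : ℝ → ℝ≥0∞) (l : ℝ≥0∞) : ℝ≥0∞ :=
  ∫⁻ x in Ioi (0:ℝ), extE F (g x / l) * ENNReal.ofReal (u x)

lemma ogauge_def (F u : _) (g : ℝ → ℝ≥0∞) :
    ogauge F u g = sInf {l : ℝ≥0∞ | 0 < l ∧ modF F u g l ≤ 1} := rfl

lemma modF_anti (h : IsNFunction F φ) (u : ℝ → ℝ) (g : ℝ → ℝ≥0∞) {l l' : ℝ≥0∞}
    (hll : l ≤ l') : modF F u g l' ≤ modF F u g l := by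
  refine lintegral_mono fun x => ?_
  exact mul_le_mul_left (extE_mono h (ENNReal.div_le_div_left hll _)) _

lemma modF_le_of_lt (h : IsNFunction F φ) (u : ℝ → ℝ) (g : ℝ → ℝ≥0∞) {l : ℝ≥0∞}
    (hl : ogauge F u g < l) : modF F u g l ≤ 1 := by
  obtain ⟨m, hm, hml⟩ := sInf_lt_iff.1 hl
  exact le_trans (modF_anti h u g hml.le) hm.2

lemma ogauge_le (F : ℝ → ℝ) (u : ℝ → ℝ) (g : ℝ → ℝ≥0∞) {l : ℝ≥0∞}
    (hl : 0 < l) (hm : modF F u g l ≤ 1) : ogauge F u g ≤ l := sInf_le ⟨hl, hm⟩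

lemma ogauge_zero (F : ℝ → ℝ) (u : ℝ → ℝ) (g : ℝ → ℝ≥0∞)
    (H : ∀ l : ℝ≥0∞, 0 < l → modF F u g l ≤ 1) : ogauge F u g = 0 := by
  refine le_antisymm ?_ (zero_le)
  by_contra hc
  push_neg at hc
  obtain ⟨m, h0m, hm⟩ := exists_between hc
  exact absurd (ogauge_le F u g h0m (H m h0m)) (not_le.2 hm)

/-- `a ≤ b * c` follows from `a ≤ b * c'` for all `c' > c`. -/
lemma le_mul_of_forall_lt' {a b c : ℝ≥0∞} (hb : b ≠ ⊤) (hc : c ≠ ⊤)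
    (H : ∀ c', c < c' → c' ≠ ⊤ → a ≤ b * c') : a ≤ b * c := by
  rcases eq_or_ne b 0 with rfl | hb0
  · have := H (c + 1) (ENNReal.lt_add_right hc one_ne_zero) (by finiteness)
    simpa using this
  refine ENNReal.le_of_forall_pos_le_add fun ε hε hbc => ?_
  have hεb : (0:ℝ≥0∞) < ε / b := ENNReal.div_pos (by exact_mod_cast hε.ne') hb
  have h1 : a ≤ b * (c + ε / b) := H _ (ENNReal.lt_add_right hc hεb.ne') (by
    refine ENNReal.add_ne_top.2 ⟨hc, ?_⟩
    exact (ENNReal.div_lt_top (by simp) hb0).ne)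
  calc a ≤ b * (c + ε / b) := h1
    _ = b * c + b * (ε / b) := by rw [mul_add]
    _ = b * c + ε := by rw [ENNReal.mul_div_cancel hb0 hb]

lemma modF_meas (h : IsNFunction F φ) {u : ℝ → ℝ} (hu : Measurable u)
    {f : ℝ → ℝ≥0∞} (hf : Measurable f) (l : ℝ≥0∞) :
    Measurable fun t : ℝ => modF F u (fun s => f (t * s)) l := by
  have hker : Measurable fun p : ℝ × ℝ => extE F (f (p.1 * p.2) / l) * ENNReal.ofReal (u p.2) :=
    ((extE_meas h).comp ((hf.comp (measurable_fst.mul measurable_snd)).div_const l)).mul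
      (ENNReal.measurable_ofReal.comp (hu.comp measurable_snd))
  exact Measurable.lintegral_prod_right' (ν := volume.restrict (Ioi 0)) hker

lemma ogauge_dil_meas (h : IsNFunction F φ) {u : ℝ → ℝ} (hu : Measurable u)
    {f : ℝ → ℝ≥0∞} (hf : Measurable f) :
    Measurable fun t : ℝ => ogauge F u fun s => f (t * s) := by
  apply measurable_of_Iio
  intro c
  have hset : (fun t : ℝ => ogauge F u fun s => f (t * s)) ⁻¹' Iio c =
      ⋃ q : ℚ, ⋃ (_ : (0:ℝ) < (q:ℝ) ∧ ENNReal.ofReal (q:ℝ) < c),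
        {t : ℝ | modF F u (fun s => f (t * s)) (ENNReal.ofReal (q:ℝ)) ≤ 1} := by
    ext t
    simp only [mem_preimage, mem_Iio, mem_iUnion, mem_setOf_eq]
    constructor
    · intro hlt
      obtain ⟨m, hm, hmc⟩ := sInf_lt_iff.1 hlt
      obtain ⟨q, hq0, hmq, hqc⟩ := ENNReal.lt_iff_exists_rat_btwn.1 hmc
      have hofeq : ((Real.toNNReal (q:ℝ) : NNReal) : ℝ≥0∞) = ENNReal.ofReal (q:ℝ) := rfl
      rw [hofeq] at hmq hqc
      have hqpos : 0 < (q:ℝ) := by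
        by_contra hq
        push_neg at hq
        rw [ENNReal.ofReal_eq_zero.2 hq] at hmq
        exact absurd hmq (not_lt.2 (zero_le))
      exact ⟨q, ⟨hqpos, hqc⟩, le_trans (modF_anti h u _ hmq.le) hm.2⟩
    · rintro ⟨q, ⟨hq0, hqc⟩, hmod⟩
      exact lt_of_le_of_lt (ogauge_le F u _ (ENNReal.ofReal_pos.2 hq0) hmod) hqc
  rw [hset]
  refine MeasurableSet.iUnion fun q => MeasurableSet.iUnion fun hq => ?_
  exact (modF_meas h hu hf _) measurableSet_Iic

lemma nf_unbounded (h : IsNFunction F φ) (M : ℝ) : ∃ s : ℝ, 0 < s ∧ M < F s := by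
  have hφ1 : 0 < φ 1 := nf_phi_pos h one_pos
  set s := 1 + (|M| + 1) / φ 1 with hs
  have hs1 : (1:ℝ) < s := by
    rw [hs]; nlinarith [div_pos (by positivity : (0:ℝ) < |M| + 1) hφ1]
  have hconv := nf_convex h one_pos (by linarith : (0:ℝ) ≤ s)
  have hF1 : 0 ≤ F 1 := nf_nonneg h zero_le_one
  have : φ 1 * (s - 1) = |M| + 1 := by
    rw [hs]; field_simp; ring
  refine ⟨s, by linarith, ?_⟩
  nlinarith [abs_nonneg M, le_abs_self M]

lemma nf_small (h : IsNFunction F φ) {r : ℝ} (hr : 1 ≤ r) : F r⁻¹ ≤ φ 1 * r⁻¹ := by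
  have hr0 : 0 < r := lt_of_lt_of_le one_pos hr
  have hi : (0:ℝ) < r⁻¹ := by positivity
  have key := nf_diff h le_rfl hi.le
  rw [nf_zero h, sub_zero] at key
  have h0 : ∀ᵐ t : ℝ, t ≠ 0 := by
    refine ae_iff.2 ?_
    have : {t : ℝ | ¬t ≠ 0} = {0} := by ext t; simp
    rw [this]; exact Real.volume_singleton
  have hcomp : φ ≤ᵐ[volume.restrict (Icc 0 r⁻¹)] fun _ => φ 1 := by
    refine (ae_restrict_iff' measurableSet_Icc).2 ?_
    filter_upwards [h0] with t ht0 hmem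
    have htpos : 0 < t := lt_of_le_of_ne hmem.1 (Ne.symm ht0)
    rcases eq_or_lt_of_le (hmem.2.trans (inv_le_one_of_one_le₀ hr)) with rfl | hlt
    · exact le_rfl
    · exact ((h.1) htpos (mem_Ioi.2 one_pos) hlt).le
  have hle := intervalIntegral.integral_mono_ae_restrict hi.le
    (nf_intble h le_rfl hi.le) (intervalIntegrable_const) hcomp
  rw [intervalIntegral.integral_const] at hle
  rw [key]
  calc ∫ t in (0:ℝ)..r⁻¹, φ t ≤ (r⁻¹ - 0) • φ 1 := hle
    _ = φ 1 * r⁻¹ := by rw [smul_eq_mul]; ring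

/-- The Ioo-mass of a weight. -/
lemma weight_Ioo_finite {u : ℝ → ℝ} (hu : IsWeight u) {a b : ℝ} (ha : 0 < a) :
    (∫⁻ y in Ioo a b, ENNReal.ofReal (u y)) < ⊤ := by
  rcases le_or_gt b a with hba | hab
  · rw [Ioo_eq_empty (by exact fun hc => absurd hba (not_le.2 hc))]
    simp
  have hcomp : IsCompact (Icc a b) := isCompact_Icc
  have hsub : Icc a b ⊆ Ioi 0 := fun y hy => lt_of_lt_of_le ha hy.1
  have hint : IntegrableOn u (Icc a b) := hu.2.2.integrableOn_compact_subset hsub hcomp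
  have hint' : IntegrableOn u (Ioo a b) := hint.mono_set Ioo_subset_Icc_self
  calc (∫⁻ y in Ioo a b, ENNReal.ofReal (u y)) ≤ ∫⁻ y in Ioo a b, ‖u y‖₊ := by
        refine lintegral_mono fun y => ?_
        rw [← enorm_eq_nnnorm, ← ofReal_norm, Real.norm_eq_abs]
        exact ENNReal.ofReal_le_ofReal (le_abs_self _)
    _ < ⊤ := hint'.2

lemma eq_zero_of_forall_mul {a c : ℝ≥0∞} (hc : c ≠ ⊤) (H : ∀ M : ℝ≥0∞, 0 < M → a ≤ M * c) :
    a = 0 := by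
  rcases eq_or_ne c 0 with rfl | hc0
  · simpa using H 1 one_pos
  have hfin : a ≠ ⊤ := by
    refine ne_top_of_le_ne_top ?_ (H 1 one_pos)
    exact ENNReal.mul_ne_top ENNReal.one_ne_top hc
  by_contra ha
  have h2 := H (a / 2 / c) (ENNReal.div_pos (by
      exact (ENNReal.div_pos ha (by norm_num)).ne') hc)
  rw [ENNReal.div_mul_cancel hc0 hc] at h2
  exact absurd h2 (not_le.2 (ENNReal.half_lt_self ha hfin))

lemma modF_indicator (h : IsNFunction F φ) {u : ℝ → ℝ} (hu : Measurable u) {a b r : ℝ}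
    (ha : 0 < a) (hr : 0 < r) :
    modF F u ((Ioo a b).indicator fun _ => (1:ℝ≥0∞)) (ENNReal.ofReal r) =
      ENNReal.ofReal (F r⁻¹) * ∫⁻ y in Ioo a b, ENNReal.ofReal (u y) := by
  have key : ∀ y ∈ Ioi (0:ℝ),
      extE F ((Ioo a b).indicator (fun _ => (1:ℝ≥0∞)) y / ENNReal.ofReal r) *
        ENNReal.ofReal (u y) =
      (Ioo a b).indicator (fun y => ENNReal.ofReal (F r⁻¹) * ENNReal.ofReal (u y)) y := by
    intro y _
    by_cases hy : y ∈ Ioo a b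
    · rw [indicator_of_mem hy, indicator_of_mem hy]
      congr 1
      rw [one_div, ← ENNReal.ofReal_inv_of_pos hr, extE,
        if_neg ENNReal.ofReal_ne_top, ENNReal.toReal_ofReal (by positivity)]
    · rw [indicator_of_notMem hy, indicator_of_notMem hy, ENNReal.zero_div, extE_zero h,
        zero_mul]
  have hinter : Ioo a b ∩ Ioi 0 = Ioo a b := by
    refine inter_eq_self_of_subset_left fun y hy => ?_
    exact ha.trans hy.1
  rw [modF, setLIntegral_congr_fun measurableSet_Ioi key,
    lintegral_indicator measurableSet_Ioo, Measure.restrict_restrict measurableSet_Ioo,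
    hinter, lintegral_const_mul' _ _ ENNReal.ofReal_ne_top]

lemma mass_zero_of_ogauge_zero (h : IsNFunction F φ) {u : ℝ → ℝ} (hu : Measurable u)
    {a b : ℝ} (ha : 0 < a)
    (H : ogauge F u ((Ioo a b).indicator fun _ => (1:ℝ≥0∞)) = 0) :
    (∫⁻ y in Ioo a b, ENNReal.ofReal (u y)) = 0 := by
  set m := ∫⁻ y in Ioo a b, ENNReal.ofReal (u y) with hm
  have key : ∀ s : ℝ, 0 < s → ENNReal.ofReal (F s) * m ≤ 1 := by
    intro s hs
    have h1 : ogauge F u ((Ioo a b).indicator fun _ => (1:ℝ≥0∞)) < ENNReal.ofReal s⁻¹ :=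
      H ▸ ENNReal.ofReal_pos.2 (by positivity)
    have h2 := modF_le_of_lt h u _ h1
    rw [modF_indicator h hu ha (by positivity : (0:ℝ) < s⁻¹), inv_inv] at h2
    exact h2
  by_contra hm0
  rcases eq_or_ne m ⊤ with hmt | hmt
  · obtain ⟨s, hs, hFs⟩ := nf_unbounded h 1
    have := key s hs
    rw [hmt, ENNReal.mul_top (by
      simpa using ENNReal.ofReal_pos.2 (lt_trans one_pos hFs) |>.ne')] at this
    simp at this
  · have hmr : 0 < m.toReal := ENNReal.toReal_pos hm0 hmt
    obtain ⟨s, hs, hFs⟩ := nf_unbounded h (2 / m.toReal)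
    have hkey := key s hs
    have : (1:ℝ≥0∞) < ENNReal.ofReal (F s) * m := by
      calc (1:ℝ≥0∞) < ENNReal.ofReal 2 := by norm_num
        _ ≤ ENNReal.ofReal (F s * m.toReal) := by
            refine ENNReal.ofReal_le_ofReal ?_
            rw [div_lt_iff₀ hmr] at hFs
            linarith
        _ = ENNReal.ofReal (F s) * m := by
            rw [ENNReal.ofReal_mul (le_trans (by positivity) (le_of_lt hFs))]
            · rw [ENNReal.ofReal_toReal hmt]
    exact absurd hkey (not_le.2 this)

lemma weight_total_zero {u : ℝ → ℝ}
    (H : ∀ a b : ℝ, 0 < a → a < b → (∫⁻ y in Ioo a b, ENNReal.ofReal (u y)) = 0) :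
    (∫⁻ y in Ioi (0:ℝ), ENNReal.ofReal (u y)) = 0 := by
  have hsub : Ioi (0:ℝ) ⊆ ⋃ n : ℕ, Ioo ((n+1:ℝ))⁻¹ (n+1) := by
    intro y hy
    have hy0 : (0:ℝ) < y := hy
    obtain ⟨n, hn⟩ := exists_nat_gt (max y⁻¹ y)
    refine mem_iUnion.2 ⟨n, ?_, ?_⟩
    · have h1 : y⁻¹ < (n:ℝ) + 1 := lt_of_le_of_lt (le_max_left _ _) (hn.trans (lt_add_one (n:ℝ)))
      exact (inv_lt_comm₀ (by positivity) hy0).2 h1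
    · exact lt_of_le_of_lt (le_max_right _ _) (hn.trans (lt_add_one (n:ℝ)))
  refine le_antisymm ?_ (zero_le)
  calc (∫⁻ y in Ioi (0:ℝ), ENNReal.ofReal (u y))
      ≤ ∫⁻ y in ⋃ n : ℕ, Ioo ((n+1:ℝ))⁻¹ (n+1), ENNReal.ofReal (u y) :=
        lintegral_mono_set hsub
    _ ≤ ∑' n : ℕ, ∫⁻ y in Ioo ((n+1:ℝ))⁻¹ (n+1), ENNReal.ofReal (u y) :=
        lintegral_iUnion_le _ _
    _ = 0 := by
        have hn0 : ∀ n : ℕ, (∫⁻ y in Ioo ((n+1:ℝ))⁻¹ (n+1), ENNReal.ofReal (u y)) = 0 := by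
          intro n
          rcases lt_or_ge ((n+1:ℝ))⁻¹ ((n:ℝ)+1) with hlt | hge
          · exact H _ _ (by positivity) hlt
          · rw [Ioo_eq_empty (not_lt.2 hge)]; simp
        simp [hn0]

lemma ogauge_zero_of_null (h : IsNFunction F φ) {u : ℝ → ℝ} (hu : Measurable u)
    (hnull : (∫⁻ y in Ioi (0:ℝ), ENNReal.ofReal (u y)) = 0) (g : ℝ → ℝ≥0∞) :
    ogauge F u g = 0 := by
  refine ogauge_zero F u g fun l hl => ?_
  have hae : (fun y => ENNReal.ofReal (u y)) =ᵐ[volume.restrict (Ioi 0)] 0 :=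
    (lintegral_eq_zero_iff (ENNReal.measurable_ofReal.comp hu)).1 hnull
  have : modF F u g l = ∫⁻ x in Ioi (0:ℝ), 0 := by
    refine lintegral_congr_ae ?_
    filter_upwards [hae] with x hx
    simp [hx]
  rw [this]
  simp

lemma ennreal_decomp {a k s j : ℝ≥0∞} (hs0 : s ≠ 0) (hst : s ≠ ⊤) :
    (a / (2 * s)) * ((k * s) / j) = (k * a) * (2 * j)⁻¹ := by
  rw [div_eq_mul_inv, div_eq_mul_inv,
    ENNReal.mul_inv (Or.inl (by norm_num)) (Or.inl (by norm_num)),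
    ENNReal.mul_inv (Or.inl (by norm_num)) (Or.inl (by norm_num))]
  calc a * (2⁻¹ * s⁻¹) * (k * s * j⁻¹) = (s⁻¹ * s) * (a * 2⁻¹ * k * j⁻¹) := by ring
    _ = a * 2⁻¹ * k * j⁻¹ := by rw [ENNReal.inv_mul_cancel hs0 hst, one_mul]
    _ = k * a * (2⁻¹ * j⁻¹) := by ring

theorem statement17
    (K : ℝ → ℝ → ℝ≥0∞) (hK : Measurable (Function.uncurry K))
    (hhom : ∀ l > 0, ∀ x > 0, ∀ y > 0, K (l * x) (l * y) = K x y / ENNReal.ofReal l)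
    (Φ₁ φ₁ Φ₂ φ₂ : ℝ → ℝ)
    (hΦ₁ : IsNFunction Φ₁ φ₁) (hΦ₂ : IsNFunction Φ₂ φ₂)
    (u₁ u₂ : ℝ → ℝ) (hu₁ : IsWeight u₁) (hu₂ : IsWeight u₂)
    (h : ℝ → ℝ≥0∞)
    (hh : ∀ t, h t = sInf {M : ℝ≥0∞ | 0 < M ∧ ∀ f : ℝ → ℝ≥0∞, Measurable f →
      ogauge Φ₁ u₁ (fun s => f (t * s)) ≤ M * ogauge Φ₂ u₂ f})
    (hint : (∫⁻ t in Ioi (0:ℝ), K 1 t * h t) < ⊤) :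
    (∃ C > 0, ∀ f : ℝ → ℝ≥0∞, Measurable f →
      ogauge Φ₁ u₁ (TK K f) ≤ ENNReal.ofReal C * ogauge Φ₂ u₂ f) ∧
    (∀ f : ℝ → ℝ≥0∞, Measurable f → ∀ x > 0,
      TK K f x = ∫⁻ t in Ioi (0:ℝ), K 1 t * f (t * x)) := by
  have part2 : ∀ f : ℝ → ℝ≥0∞, Measurable f → ∀ x > 0,
      TK K f x = ∫⁻ t in Ioi (0:ℝ), K 1 t * f (t * x) :=
    fun f hf x hx => TK_eq K hK hhom f hf x hx
  refine ⟨?_, part2⟩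
  have hK1 : Measurable fun t : ℝ => K 1 t := hK.comp measurable_prodMk_left
  have hprop : ∀ t : ℝ, ∀ M : ℝ≥0∞, h t < M → ∀ f : ℝ → ℝ≥0∞, Measurable f →
      ogauge Φ₁ u₁ (fun s => f (t * s)) ≤ M * ogauge Φ₂ u₂ f := by
    intro t M hM f hf
    rw [hh t] at hM
    obtain ⟨m, hm, hmM⟩ := sInf_lt_iff.1 hM
    exact (hm.2 f hf).trans (mul_le_mul_left hmM.le _)
  by_cases hA : ∃ t0 > 0, h t0 = 0
  · -- degenerate case: u₁ vanishes a.e.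
    obtain ⟨t0, ht0, hh0⟩ := hA
    have hzero : ∀ a b : ℝ, 0 < a → a < b →
        (∫⁻ y in Ioo a b, ENNReal.ofReal (u₁ y)) = 0 := by
      intro a b ha hab
      set f : ℝ → ℝ≥0∞ := (Ioo (t0*a) (t0*b)).indicator (fun _ => (1:ℝ≥0∞)) with hfdef
      have hfm : Measurable f := measurable_const.indicator measurableSet_Ioo
      have hfeq : (fun s => f (t0 * s)) = (Ioo a b).indicator (fun _ => (1:ℝ≥0∞)) := by
        funext s
        rw [hfdef]
        by_cases hs : s ∈ Ioo a b
        · have hmem : t0 * s ∈ Ioo (t0*a) (t0*b) :=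
            ⟨(mul_lt_mul_iff_right₀ ht0).2 hs.1, (mul_lt_mul_iff_right₀ ht0).2 hs.2⟩
          rw [indicator_of_mem hs, indicator_of_mem hmem]
        · have hmem : t0 * s ∉ Ioo (t0*a) (t0*b) := fun hc =>
            hs ⟨(mul_lt_mul_iff_right₀ ht0).1 hc.1, (mul_lt_mul_iff_right₀ ht0).1 hc.2⟩
          rw [indicator_of_notMem hs, indicator_of_notMem hmem]
      set m2 := ∫⁻ y in Ioo (t0*a) (t0*b), ENNReal.ofReal (u₂ y) with hm2def
      have hm2 : m2 < ⊤ := weight_Ioo_finite hu₂ (by positivity)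
      have hρ2 : ogauge Φ₂ u₂ f ≠ ⊤ := by
        set r : ℝ := max 1 (φ₂ 1 * m2.toReal) with hrdef
        have hr1 : (1:ℝ) ≤ r := le_max_left _ _
        have hr0 : (0:ℝ) < r := lt_of_lt_of_le one_pos hr1
        refine ne_top_of_le_ne_top ENNReal.ofReal_ne_top
          (ogauge_le _ _ _ (ENNReal.ofReal_pos.2 hr0) ?_)
        rw [hfdef]
        rw [modF_indicator hΦ₂ hu₂.1 (by positivity) hr0]
        have hφpos : 0 < φ₂ 1 := nf_phi_pos hΦ₂ one_pos
        calc ENNReal.ofReal (Φ₂ r⁻¹) * m2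
            ≤ ENNReal.ofReal (φ₂ 1 * r⁻¹) * ENNReal.ofReal m2.toReal := by
              refine mul_le_mul' (ENNReal.ofReal_le_ofReal (nf_small hΦ₂ hr1)) ?_
              rw [ENNReal.ofReal_toReal hm2.ne]
          _ = ENNReal.ofReal (φ₂ 1 * r⁻¹ * m2.toReal) := by
              rw [← ENNReal.ofReal_mul (by positivity)]
          _ ≤ 1 := by
              refine ENNReal.ofReal_le_one.2 ?_
              have h1 : φ₂ 1 * m2.toReal ≤ r := le_max_right _ _
              have h2 : (0:ℝ) ≤ m2.toReal := ENNReal.toReal_nonneg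
              rw [mul_comm (φ₂ 1) r⁻¹, mul_assoc, ← div_eq_inv_mul]
              exact div_le_one_of_le₀ h1 hr0.le
      have hδ0 : ogauge Φ₁ u₁ ((Ioo a b).indicator fun _ => (1:ℝ≥0∞)) = 0 := by
        rw [← hfeq]
        refine eq_zero_of_forall_mul hρ2 fun M hM => ?_
        exact hprop t0 M (by rw [hh0]; exact hM) f hfm
      exact mass_zero_of_ogauge_zero hΦ₁ hu₁.1 ha hδ0
    have hnull := weight_total_zero hzero
    exact ⟨1, one_pos, fun f hf => by
      rw [ogauge_zero_of_null hΦ₁ hu₁.1 hnull (TK K f)]; exact zero_le⟩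
  · -- main case: h is everywhere positive on Ioi 0
    push_neg at hA
    set I := ∫⁻ t in Ioi (0:ℝ), K 1 t * h t with hIdef
    have hIt : I ≠ ⊤ := hint.ne
    -- the set where K 1 t = ⊤ is null
    have hSm : MeasurableSet {t : ℝ | t ∈ Ioi (0:ℝ) ∧ K 1 t = ⊤} :=
      measurableSet_Ioi.inter (hK1 (measurableSet_singleton ⊤))
    have hFnull : volume {t : ℝ | t ∈ Ioi (0:ℝ) ∧ K 1 t = ⊤} = 0 := by
      by_contra hc
      have hmono : ∫⁻ t in Ioi (0:ℝ),
          ({t : ℝ | t ∈ Ioi (0:ℝ) ∧ K 1 t = ⊤}).indicator (fun _ => (⊤:ℝ≥0∞)) t ≤ I := by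
        refine lintegral_mono_ae ((ae_restrict_iff' measurableSet_Ioi).2 (ae_of_all _ ?_))
        intro t ht
        by_cases hts : t ∈ {t : ℝ | t ∈ Ioi (0:ℝ) ∧ K 1 t = ⊤}
        · rw [indicator_of_mem hts, hts.2, ENNReal.top_mul (hA t ht)]
        · rw [indicator_of_notMem hts]; exact zero_le
      rw [lintegral_indicator hSm, setLIntegral_const, Measure.restrict_apply hSm] at hmono
      have hss : {t : ℝ | t ∈ Ioi (0:ℝ) ∧ K 1 t = ⊤} ∩ Ioi 0 =
          {t : ℝ | t ∈ Ioi (0:ℝ) ∧ K 1 t = ⊤} :=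
        inter_eq_self_of_subset_left fun t ht => ht.1
      rw [hss, ENNReal.top_mul hc] at hmono
      exact hIt (top_le_iff.1 hmono)
    have haeK : ∀ᵐ t ∂(volume.restrict (Ioi (0:ℝ))), K 1 t ≠ ⊤ := by
      rw [ae_restrict_iff' measurableSet_Ioi, ae_iff]
      have : {t : ℝ | ¬(t ∈ Ioi 0 → K 1 t ≠ ⊤)} = {t : ℝ | t ∈ Ioi (0:ℝ) ∧ K 1 t = ⊤} := by
        ext t; simp [Classical.not_imp]
      rw [this]; exact hFnull
    -- main bound
    refine ⟨(2*I).toReal + 1, by positivity, fun f hf => ?_⟩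
    set ρ₂ := ogauge Φ₂ u₂ f with hρ₂def
    have hCpos : ENNReal.ofReal ((2*I).toReal + 1) ≠ 0 := by
      refine (ENNReal.ofReal_pos.2 ?_).ne'
      positivity
    rcases eq_or_ne ρ₂ ⊤ with hρt | hρt
    · rw [hρt, ENNReal.mul_top hCpos]; exact le_top
    have main : ∀ lam : ℝ≥0∞, ρ₂ < lam → lam ≠ ⊤ → ∀ c', I < c' → c' ≠ ⊤ →
        ogauge Φ₁ u₁ (TK K f) ≤ (2 * lam) * c' := by
      intro lam hρlam hlamt c' hIc' hc't
      have hlam0 : 0 < lam := lt_of_le_of_lt (zero_le) hρlam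
      set δ : ℝ := (c' - I).toReal with hδdef
      have hδpos : 0 < δ := ENNReal.toReal_pos (tsub_pos_of_lt hIc').ne'
        (by simp [ENNReal.sub_ne_top hc't])
      have hIδ : I + ENNReal.ofReal δ = c' := by
        rw [hδdef, ENNReal.ofReal_toReal (ENNReal.sub_ne_top hc't)]
        exact add_tsub_cancel_of_le hIc'.le
      -- the per-f dilation gauge
      set ζ : ℝ → ℝ≥0∞ := fun t => ogauge Φ₁ u₁ fun s => f (t * s) with hζdef
      have hζm : Measurable ζ := ogauge_dil_meas hΦ₁ hu₁.1 hf
      have hζle : ∀ t : ℝ, ζ t ≤ lam * h t := by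
        intro t
        rcases eq_or_ne (h t) ⊤ with hht | hht
        · rw [hht, ENNReal.mul_top hlam0.ne']; exact le_top
        refine le_mul_of_forall_lt' hlamt hht fun M hM hMt => ?_
        calc ζ t ≤ M * ρ₂ := hprop t M hM f hf
          _ ≤ M * lam := mul_le_mul_right hρlam.le _
          _ = lam * M := mul_comm _ _
      set ε : ℝ → ℝ≥0∞ := fun t =>
        ENNReal.ofReal δ * ENNReal.ofReal (Real.exp (-t)) * (K 1 t + 1)⁻¹ with hεdef
      have hεm : Measurable ε :=
        (measurable_const.mul (ENNReal.measurable_ofReal.comp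
          (Real.measurable_exp.comp measurable_neg))).mul ((hK1.add measurable_const).inv)
      set σ : ℝ → ℝ≥0∞ := fun t => ζ t + lam * ε t with hσdef
      have hσm : Measurable σ := hζm.add (measurable_const.mul hεm)
      set W : ℝ → ℝ≥0∞ := fun t => K 1 t * σ t with hWdef
      have hWm : Measurable W := hK1.mul hσm
      set J := ∫⁻ t in Ioi (0:ℝ), W t with hJdef
      -- J ≤ lam * c'
      have hKζint : (∫⁻ t in Ioi (0:ℝ), K 1 t * ζ t) ≤ lam * I := by
        calc (∫⁻ t in Ioi (0:ℝ), K 1 t * ζ t)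
            ≤ ∫⁻ t in Ioi (0:ℝ), lam * (K 1 t * h t) := by
              refine lintegral_mono fun t => ?_
              calc K 1 t * ζ t ≤ K 1 t * (lam * h t) := mul_le_mul_right (hζle t) _
                _ = lam * (K 1 t * h t) := by ring
          _ = lam * I := lintegral_const_mul' _ _ hlamt
      have hKεint : (∫⁻ t in Ioi (0:ℝ), K 1 t * (lam * ε t)) ≤ lam * ENNReal.ofReal δ := by
        calc (∫⁻ t in Ioi (0:ℝ), K 1 t * (lam * ε t))
            ≤ ∫⁻ t in Ioi (0:ℝ), (lam * ENNReal.ofReal δ) * ENNReal.ofReal (Real.exp (-t)) := by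
              refine lintegral_mono fun t => ?_
              rw [hεdef]
              calc K 1 t * (lam * (ENNReal.ofReal δ * ENNReal.ofReal (Real.exp (-t)) *
                    (K 1 t + 1)⁻¹))
                  = (lam * ENNReal.ofReal δ * ENNReal.ofReal (Real.exp (-t))) *
                    (K 1 t * (K 1 t + 1)⁻¹) := by ring
                _ ≤ (lam * ENNReal.ofReal δ * ENNReal.ofReal (Real.exp (-t))) * 1 := by
                    refine mul_le_mul_right ?_ _
                    exact le_trans (mul_le_mul_left le_self_add _) (ENNReal.mul_inv_le_one _)
                _ = (lam * ENNReal.ofReal δ) * ENNReal.ofReal (Real.exp (-t)) := by ring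
          _ = (lam * ENNReal.ofReal δ) * ∫⁻ t in Ioi (0:ℝ), ENNReal.ofReal (Real.exp (-t)) :=
              lintegral_const_mul' _ _ (ENNReal.mul_ne_top hlamt ENNReal.ofReal_ne_top)
          _ ≤ (lam * ENNReal.ofReal δ) * 1 := by
              refine mul_le_mul_right ?_ _
              have hexp : (∫⁻ t in Ioi (0:ℝ), ENNReal.ofReal (Real.exp (-t)))
                  = ENNReal.ofReal (∫ t in Ioi (0:ℝ), Real.exp (-t)) := by
                rw [← ofReal_integral_eq_lintegral_ofReal]
                · have : (fun x : ℝ => Real.exp (-x)) = fun x : ℝ => Real.exp (-1 * x) := by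
                    funext x; rw [neg_one_mul]
                  rw [this]
                  exact exp_neg_integrableOn_Ioi 0 one_pos
                · exact ae_of_all _ fun t => (Real.exp_pos _).le
              rw [hexp, integral_exp_neg_Ioi_zero]
              simp
          _ = lam * ENNReal.ofReal δ := by rw [mul_one]
      have hJle : J ≤ lam * c' := by
        have hsplit : J = (∫⁻ t in Ioi (0:ℝ), K 1 t * ζ t) +
            ∫⁻ t in Ioi (0:ℝ), K 1 t * (lam * ε t) := by
          rw [hJdef, ← lintegral_add_left (f := fun t => K 1 t * ζ t) (hK1.mul hζm)]
          refine lintegral_congr fun t => ?_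
          rw [hWdef, hσdef]; ring
        rw [hsplit, ← hIδ, mul_add]
        exact add_le_add hKζint hKεint
      have hJt : J ≠ ⊤ :=
        (lt_of_le_of_lt hJle (ENNReal.mul_lt_top hlamt.lt_top hc't.lt_top)).ne
      rcases eq_or_ne J 0 with hJ0 | hJ0
      · -- degenerate: K 1 vanishes a.e., so TK f = 0 on Ioi 0
        have hW0 : W =ᵐ[volume.restrict (Ioi (0:ℝ))] 0 :=
          (lintegral_eq_zero_iff hWm).1 hJ0
        have hK0 : ∀ᵐ t ∂(volume.restrict (Ioi (0:ℝ))), K 1 t = 0 := by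
          filter_upwards [hW0, haeK] with t hWt hKt
          have hεpos : 0 < ε t := by
            rw [hεdef]
            refine ENNReal.mul_pos ?_ ?_ |>.trans_le le_rfl
            · exact (ENNReal.mul_pos (ENNReal.ofReal_pos.2 hδpos).ne'
                (ENNReal.ofReal_pos.2 (Real.exp_pos _)).ne').ne'
            · simp [ENNReal.add_ne_top, hKt]
          have hσpos : 0 < σ t := by
            rw [hσdef]
            exact lt_of_lt_of_le (ENNReal.mul_pos hlam0.ne' hεpos.ne') le_add_self
          rcases mul_eq_zero.1 hWt with hc | hc
          · exact hc
          · exact absurd hc hσpos.ne'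
        have hTK0 : ∀ x ∈ Ioi (0:ℝ), TK K f x = 0 := by
          intro x hx
          rw [part2 f hf x hx]
          rw [← lintegral_zero (μ := volume.restrict (Ioi (0:ℝ)))]
          refine lintegral_congr_ae ?_
          filter_upwards [hK0] with t ht
          rw [ht, zero_mul]
        have : ogauge Φ₁ u₁ (TK K f) = 0 := by
          refine ogauge_zero _ _ _ fun l hl => ?_
          have : modF Φ₁ u₁ (TK K f) l = ∫⁻ x in Ioi (0:ℝ), 0 := by
            refine setLIntegral_congr_fun measurableSet_Ioi (fun x hx => ?_)
            rw [hTK0 x hx, ENNReal.zero_div, extE_zero hΦ₁, zero_mul]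
          rw [this]; simp
        rw [this]; exact zero_le
      · -- main Jensen estimate
        have h2J0 : (0:ℝ≥0∞) < 2 * J := ENNReal.mul_pos (by norm_num) hJ0
        have h2Jt : (2:ℝ≥0∞) * J ≠ ⊤ := ENNReal.mul_ne_top (by norm_num) hJt
        have hinvJt : J⁻¹ ≠ ⊤ := by simp [hJ0]
        have hw1 : (∫⁻ t in Ioi (0:ℝ), W t / J) = 1 := by
          simp_rw [div_eq_mul_inv]
          rw [lintegral_mul_const' _ _ hinvJt, ← hJdef, ENNReal.mul_inv_cancel hJ0 hJt]
        have haeζt : ∀ᵐ t ∂(volume.restrict (Ioi (0:ℝ))), K 1 t * ζ t < ⊤ :=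
          ae_lt_top (hK1.mul hζm)
            (lt_of_le_of_lt hKζint (ENNReal.mul_lt_top hlamt.lt_top hint)).ne
        have hgood : ∀ᵐ t ∂(volume.restrict (Ioi (0:ℝ))),
            K 1 t = 0 ∨ (σ t ≠ 0 ∧ σ t ≠ ⊤) := by
          filter_upwards [haeK, haeζt] with t hKt hKζ
          rcases eq_or_ne (K 1 t) 0 with h0 | h0
          · exact Or.inl h0
          refine Or.inr ⟨?_, ?_⟩
          · have hεpos : 0 < ε t := by
              rw [hεdef]
              refine ENNReal.mul_pos ?_ ?_
              · exact (ENNReal.mul_pos (ENNReal.ofReal_pos.2 hδpos).ne'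
                  (ENNReal.ofReal_pos.2 (Real.exp_pos _)).ne').ne'
              · simp [ENNReal.add_ne_top, hKt]
            have : 0 < σ t := by
              rw [hσdef]
              exact lt_of_lt_of_le (ENNReal.mul_pos hlam0.ne' hεpos.ne') le_add_self
            exact this.ne'
          · have hζt : ζ t ≠ ⊤ := by
              intro hc
              rw [hc, ENNReal.mul_top h0] at hKζ
              exact absurd hKζ (lt_irrefl _)
            have hεt : ε t ≠ ⊤ := by
              rw [hεdef]
              refine ENNReal.mul_ne_top (ENNReal.mul_ne_top ENNReal.ofReal_ne_top
                ENNReal.ofReal_ne_top) ?_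
              simp
            rw [hσdef]
            exact ENNReal.add_ne_top.2 ⟨hζt, ENNReal.mul_ne_top hlamt hεt⟩
        have claim1 : ∀ x ∈ Ioi (0:ℝ),
            extE Φ₁ (TK K f x / (2 * J)) ≤
              ∫⁻ t in Ioi (0:ℝ), (W t / J) * extE Φ₁ (f (t * x) / (2 * σ t)) := by
          intro x hx
          have h2Jinv : ((2:ℝ≥0∞) * J)⁻¹ ≠ ⊤ := by
            simp [h2J0.ne']
          have hident : TK K f x / (2 * J) =
              ∫⁻ t in Ioi (0:ℝ), (f (t * x) / (2 * σ t)) * (W t / J) := by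
            rw [part2 f hf x hx, div_eq_mul_inv, ← lintegral_mul_const' _ _ h2Jinv]
            refine lintegral_congr_ae ?_
            filter_upwards [hgood] with t hg
            rcases hg with h0 | ⟨hσ0, hσt⟩
            · simp [hWdef, h0]
            · rw [hWdef]
              exact (ennreal_decomp hσ0 hσt).symm
          rw [hident]
          refine (nf_jensen hΦ₁ (volume.restrict (Ioi (0:ℝ))) (fun t => W t / J)
            (fun t => f (t * x) / (2 * σ t)) (hWm.div_const J) (le_of_eq hw1)).trans ?_
          exact lintegral_mono fun t => le_of_eq (mul_comm _ _)
        have hmod : modF Φ₁ u₁ (TK K f) (2 * J) ≤ 1 := by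
          have huncur : Measurable (fun p : ℝ × ℝ => (W p.2 / J) *
              (extE Φ₁ (f (p.2 * p.1) / (2 * σ p.2)) * ENNReal.ofReal (u₁ p.1))) := by
            refine ((hWm.comp measurable_snd).div_const J).mul ?_
            refine Measurable.mul ?_ (ENNReal.measurable_ofReal.comp (hu₁.1.comp measurable_fst))
            refine (extE_meas hΦ₁).comp ?_
            exact (hf.comp (measurable_snd.mul measurable_fst)).div
              (measurable_const.mul (hσm.comp measurable_snd))
          calc modF Φ₁ u₁ (TK K f) (2 * J)
              ≤ ∫⁻ x in Ioi (0:ℝ), (∫⁻ t in Ioi (0:ℝ),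
                  (W t / J) * extE Φ₁ (f (t * x) / (2 * σ t))) * ENNReal.ofReal (u₁ x) := by
                rw [modF]
                refine lintegral_mono_ae ((ae_restrict_iff' measurableSet_Ioi).2
                  (ae_of_all _ fun x hx => ?_))
                exact mul_le_mul_left (claim1 x hx) _
            _ = ∫⁻ x in Ioi (0:ℝ), ∫⁻ t in Ioi (0:ℝ),
                  (W t / J) * (extE Φ₁ (f (t * x) / (2 * σ t)) * ENNReal.ofReal (u₁ x)) := by
                refine lintegral_congr fun x => ?_
                rw [← lintegral_mul_const' _ _ ENNReal.ofReal_ne_top]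
                exact lintegral_congr fun t => by ring
            _ = ∫⁻ t in Ioi (0:ℝ), ∫⁻ x in Ioi (0:ℝ),
                  (W t / J) * (extE Φ₁ (f (t * x) / (2 * σ t)) * ENNReal.ofReal (u₁ x)) :=
                lintegral_lintegral_swap huncur.aemeasurable
            _ = ∫⁻ t in Ioi (0:ℝ), (W t / J) *
                  modF Φ₁ u₁ (fun s => f (t * s)) (2 * σ t) := by
                refine lintegral_congr fun t => ?_
                rw [modF]
                exact lintegral_const_mul'' _ (((extE_meas hΦ₁).comp ((hf.comp
                  (measurable_const.mul measurable_id)).div_const _)).mul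
                  (ENNReal.measurable_ofReal.comp hu₁.1)).aemeasurable
            _ ≤ ∫⁻ t in Ioi (0:ℝ), W t / J := by
                refine lintegral_mono_ae ?_
                filter_upwards [hgood] with t hg
                rcases hg with h0 | ⟨hσ0, hσt⟩
                · simp [hWdef, h0]
                · have hσlt : σ t < 2 * σ t := by
                    rw [two_mul]
                    exact ENNReal.lt_add_right hσt hσ0
                  have hog : ogauge Φ₁ u₁ (fun s => f (t * s)) < 2 * σ t := by
                    refine lt_of_le_of_lt ?_ hσlt
                    rw [hσdef]
                    exact le_add_right le_rfl
                  calc (W t / J) * modF Φ₁ u₁ (fun s => f (t * s)) (2 * σ t)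
                      ≤ (W t / J) * 1 := mul_le_mul_right (modF_le_of_lt hΦ₁ u₁ _ hog) _
                    _ = W t / J := mul_one _
            _ = 1 := hw1
        calc ogauge Φ₁ u₁ (TK K f) ≤ 2 * J := ogauge_le _ _ _ h2J0 hmod
          _ ≤ 2 * (lam * c') := mul_le_mul_right hJle 2
          _ = 2 * lam * c' := (mul_assoc _ _ _).symm
    -- conclude from `main` by two limiting steps
    have step1 : ∀ lam : ℝ≥0∞, ρ₂ < lam → lam ≠ ⊤ →
        ogauge Φ₁ u₁ (TK K f) ≤ (2 * I) * lam := by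
      intro lam hρlam hlamt
      have := le_mul_of_forall_lt' (a := ogauge Φ₁ u₁ (TK K f)) (b := 2 * lam) (c := I)
        (by exact ENNReal.mul_ne_top (by norm_num) hlamt) hIt (main lam hρlam hlamt)
      calc ogauge Φ₁ u₁ (TK K f) ≤ (2 * lam) * I := this
        _ = (2 * I) * lam := by ring
    have step2 : ogauge Φ₁ u₁ (TK K f) ≤ (2 * I) * ρ₂ :=
      le_mul_of_forall_lt' (ENNReal.mul_ne_top (by norm_num) hIt) hρt
        fun lam hρlam hlamt => step1 lam hρlam hlamt
    refine step2.trans (mul_le_mul_left ?_ _)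
    conv_lhs => rw [← ENNReal.ofReal_toReal (ENNReal.mul_ne_top (by norm_num : (2:ℝ≥0∞) ≠ ⊤) hIt)]
    exact ENNReal.ofReal_le_ofReal (by linarith)

end
end
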